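/- arXiv:2010.10464 — 6 statements merged into one kernel-verified Lean document; each statement's English description precedes it below -/
import Mathlib

section
/- For the Shangguan et al. Construction-I placement with parameters n, a, b (positive integers, a + b ≤ n), assume ε ≥ 1 and Z = C(n,a) − C(n−b,a) ≥ 2ε + 1, and let a₀ be the smallest integer with C(a₀, a−1) ≥ 2ε. If a₀ ≤ n − b, then ℓ*(X,ε) ≥ 2ε(n − b − a₀ + 1) + C(a₀, a). -/
open Matrix Finset

/-- `H` is a valid encoder for the `(X, ε)` cache update problem: for every node `k`
there is a decoder `D_k` recovering `(w+e)|_{X_k}` from the codeword `H(w+e)` and the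
side information `w|_{X_k}`, for all `w` and all updates `e` of Hamming weight at most `ε`. -/
def ValidEncoder {𝓕 𝓚 : Type} [Fintype 𝓕] (F : Type) [Field F] [Fintype F]
    (X : 𝓚 → Finset 𝓕) (ε : ℕ) {l : ℕ} (H : Matrix (Fin l) 𝓕 F) : Prop :=
  ∀ k : 𝓚, ∃ D : (Fin l → F) → ({f // f ∈ X k} → F) → ({f // f ∈ X k} → F),
    ∀ w e : 𝓕 → F, {f | e f ≠ 0}.ncard ≤ ε →
      D (H.mulVec (w + e)) (fun f => w f.1) = fun f => (w + e) f.1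

/-- The optimal codelength `ℓ*(X, ε)`: the least `l` for which some finite field `F`
admits a valid encoder `H ∈ F^{l×F}` for the `(X, ε)` cache update problem. -/
noncomputable def optLen {𝓕 𝓚 : Type} [Fintype 𝓕] (X : 𝓚 → Finset 𝓕) (ε : ℕ) : ℕ :=
  sInf {l : ℕ | ∃ (F : Type) (inst1 : Field F) (inst2 : Fintype F)
    (H : Matrix (Fin l) 𝓕 F), @ValidEncoder 𝓕 𝓚 _ F inst1 inst2 X ε l H}

section Counting

lemma card_filter_lt_fin (n m : ℕ) (h : m ≤ n) :
    ((univ : Finset (Fin n)).filter (fun x : Fin n => (x : ℕ) < m)).card = m := by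
  rw [← Fintype.card_subtype]
  rw [Fintype.card_congr
    (⟨fun x => ⟨x.1.1, x.2⟩, fun y => ⟨⟨y.1, y.2.trans_le h⟩, y.2⟩,
      fun x => rfl, fun y => rfl⟩ :
      {x : Fin n // (x : ℕ) < m} ≃ Fin m)]
  exact Fintype.card_fin m

lemma card_filter_le_fin (n m : ℕ) :
    ((univ : Finset (Fin n)).filter (fun x : Fin n => m ≤ (x : ℕ))).card = n - m := by
  by_cases h : m ≤ n
  · have he : (univ : Finset (Fin n)).filter (fun x : Fin n => m ≤ (x : ℕ))
        = univ \ (univ.filter (fun x : Fin n => (x : ℕ) < m)) := by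
      rw [← Finset.filter_not]
      exact Finset.filter_congr (by intro x _; simp [not_lt])
    rw [he, Finset.card_sdiff_of_subset (Finset.filter_subset _ _), card_filter_lt_fin n m h,
      Finset.card_univ, Fintype.card_fin]
  · push_neg at h
    have h1 : (univ : Finset (Fin n)).filter (fun x : Fin n => m ≤ (x : ℕ)) = ∅ := by
      apply Finset.filter_false_of_mem
      intro x _
      have := x.2
      omega
    rw [h1]
    have := Nat.sub_eq_zero_of_le h.le
    simp [this]

lemma count_subsets (n r : ℕ) (A : Finset (Fin n)) :
    ((univ : Finset {s : Finset (Fin n) // s.card = r}).filter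
      (fun f => f.1 ⊆ A)).card = A.card.choose r := by
  rw [← Finset.card_powersetCard r A]
  apply Finset.card_bij (fun f _ => f.1)
  · intro f hf
    simp only [Finset.mem_filter, mem_univ, true_and] at hf
    simp [Finset.mem_powersetCard, hf, f.2]
  · intro f _ g _ h
    exact Subtype.ext h
  · intro t ht
    rw [Finset.mem_powersetCard] at ht
    exact ⟨⟨t, ht.2⟩, by simp [ht.1], rfl⟩

lemma count_subsets_mem (n r : ℕ) (hr : 0 < r) (A : Finset (Fin n)) (x : Fin n) (hx : x ∉ A) :
    ((univ : Finset {s : Finset (Fin n) // s.card = r}).filter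
      (fun f => f.1 ⊆ insert x A ∧ x ∈ f.1)).card = A.card.choose (r - 1) := by
  rw [← Finset.card_powersetCard (r-1) A]
  apply Finset.card_bij (fun f _ => f.1.erase x)
  · intro f hf
    simp only [Finset.mem_filter, mem_univ, true_and] at hf
    rw [Finset.mem_powersetCard]
    constructor
    · intro y hy
      rcases Finset.mem_erase.mp hy with ⟨hyx, hyf⟩
      rcases Finset.mem_insert.mp (hf.1 hyf) with h | h
      · exact absurd h hyx
      · exact h
    · rw [Finset.card_erase_of_mem hf.2, f.2]
  · intro f hf g hg h
    simp only [Finset.mem_filter, mem_univ, true_and] at hf hg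
    apply Subtype.ext
    have : insert x (f.1.erase x) = insert x (g.1.erase x) := by rw [h]
    rwa [Finset.insert_erase hf.2, Finset.insert_erase hg.2] at this
  · intro t ht
    rw [Finset.mem_powersetCard] at ht
    have hxt : x ∉ t := fun hxt => hx (ht.1 hxt)
    have hcard : (insert x t).card = r := by
      rw [Finset.card_insert_of_notMem hxt, ht.2]
      omega
    refine ⟨⟨insert x t, hcard⟩, ?_, ?_⟩
    · simp only [Finset.mem_filter, mem_univ, true_and]
      exact ⟨Finset.insert_subset_insert x ht.1, Finset.mem_insert_self x t⟩
    · simp [Finset.erase_insert hxt]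

end Counting

section Core

variable {𝓕 𝓚 : Type} [Fintype 𝓕] {F : Type} [Field F] [Fintype F]
  {X : 𝓚 → Finset 𝓕} {ε l : ℕ} {H : Matrix (Fin l) 𝓕 F}

lemma exists_valid_encoder {𝓕' 𝓚' : Type} [Fintype 𝓕'] (X' : 𝓚' → Finset 𝓕') (ε' : ℕ) :
    ∃ l : ℕ, ∃ (F : Type) (inst1 : Field F) (inst2 : Fintype F)
      (H : Matrix (Fin l) 𝓕' F), @ValidEncoder 𝓕' 𝓚' _ F inst1 inst2 X' ε' l H := by
  classical
  haveI : Fact (Nat.Prime 2) := ⟨Nat.prime_two⟩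
  refine ⟨Fintype.card 𝓕', ZMod 2, inferInstance, inferInstance,
    Matrix.of (fun i f => if (Fintype.equivFin 𝓕').symm i = f then 1 else 0), ?_⟩
  intro k
  refine ⟨fun cw _ => fun f => cw ((Fintype.equivFin 𝓕') f.1), ?_⟩
  intro w e _
  funext f
  have key : ∀ v : 𝓕' → ZMod 2, (Matrix.of (fun i g => if (Fintype.equivFin 𝓕').symm i = g
      then (1 : ZMod 2) else 0)).mulVec v ((Fintype.equivFin 𝓕') f.1) = v f.1 := by
    intro v
    simp only [Matrix.mulVec, dotProduct, Matrix.of_apply, Equiv.symm_apply_apply,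
      ite_mul, one_mul, zero_mul]
    rw [Finset.sum_ite_eq (Finset.univ) f.1 v]
    simp
  exact key (w + e)

lemma ker_cond (hH : ValidEncoder F X ε H) (k : 𝓚) (d : 𝓕 → F)
    (hd : H.mulVec d = 0)
    (hw : {f | f ∈ X k ∧ d f ≠ 0}.ncard ≤ 2 * ε) :
    ∀ f ∈ X k, d f = 0 := by
  classical
  obtain ⟨D, hD⟩ := hH k
  set S : Finset 𝓕 := univ.filter (fun f => f ∈ X k ∧ d f ≠ 0) with hS
  have hScard : S.card ≤ 2 * ε := by
    have : {f | f ∈ X k ∧ d f ≠ 0} = ↑S := by ext f; simp [hS]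
    rwa [this, Set.ncard_coe_finset] at hw
  obtain ⟨S1, hS1sub, hS1card⟩ := Finset.exists_subset_card_eq (min_le_left S.card ε)
  set e : 𝓕 → F := fun f => if f ∈ S1 then d f else 0 with he
  set e' : 𝓕 → F := fun f => if f ∈ S \ S1 then -d f else 0 with he'
  set w' : 𝓕 → F := fun f => e f - d f - e' f with hw'
  have hcard1 : {f | e f ≠ 0}.ncard ≤ ε := by
    have hsub : {f | e f ≠ 0} ⊆ ↑S1 := by
      intro f hf
      simp only [Set.mem_setOf_eq, he] at hf
      by_contra hfn
      rw [if_neg (by simpa using hfn)] at hf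
      exact hf rfl
    calc {f | e f ≠ 0}.ncard ≤ (↑S1 : Set 𝓕).ncard := Set.ncard_le_ncard hsub S1.finite_toSet
      _ = S1.card := Set.ncard_coe_finset S1
      _ ≤ ε := by rw [hS1card]; exact min_le_right _ _
  have hcard2 : {f | e' f ≠ 0}.ncard ≤ ε := by
    have hsub : {f | e' f ≠ 0} ⊆ ↑(S \ S1) := by
      intro f hf
      simp only [Set.mem_setOf_eq, he'] at hf
      by_contra hfn
      rw [if_neg (by simpa using hfn)] at hf
      exact hf rfl
    calc {f | e' f ≠ 0}.ncard ≤ (↑(S \ S1) : Set 𝓕).ncard :=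
          Set.ncard_le_ncard hsub (S \ S1).finite_toSet
      _ = (S \ S1).card := Set.ncard_coe_finset _
      _ ≤ ε := by rw [Finset.card_sdiff_of_subset hS1sub, hS1card]; omega
  have hsum1 : (fun _ => (0 : F)) + e = e := by funext f; simp
  have hsum2 : w' + e' = e - d := by
    funext f
    show e f - d f - e' f + e' f = e f - d f
    ring
  have hmv : H.mulVec ((fun _ => (0:F)) + e) = H.mulVec (w' + e') := by
    rw [hsum1, hsum2, Matrix.mulVec_sub, hd]
    simp
  have hside : (fun f : {f // f ∈ X k} => (fun _ => (0:F)) f.1)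
      = fun f : {f // f ∈ X k} => w' f.1 := by
    funext f
    have hfX := f.2
    show (0 : F) = w' f.1
    rw [hw']
    by_cases h1 : f.1 ∈ S1
    · have h2 : f.1 ∉ S \ S1 := fun hc => (Finset.mem_sdiff.mp hc).2 h1
      rw [he, he']
      simp only [if_pos h1, if_neg h2]
      ring
    · by_cases h2 : f.1 ∈ S \ S1
      · rw [he, he']
        simp only [if_neg h1, if_pos h2]
        ring
      · have hdf : d f.1 = 0 := by
          by_contra hdf
          have : f.1 ∈ S := by simp [hS, hfX, hdf]
          exact h2 (Finset.mem_sdiff.mpr ⟨this, h1⟩)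
        rw [he, he']
        simp only [if_neg h1, if_neg h2, hdf]
        ring
  have heq1 := hD (fun _ => (0:F)) e hcard1
  have heq2 := hD w' e' hcard2
  rw [hmv, hside, heq2] at heq1
  intro f hf
  have hcf := congrFun heq1 ⟨f, hf⟩
  rw [hsum2] at hcf
  simp only [Pi.sub_apply, Pi.add_apply] at hcf
  have hcf' : e f - d f = 0 + e f := hcf
  linear_combination -hcf'

lemma mulVec_eq_lc (H : Matrix (Fin l) 𝓕 F) (m : 𝓕 →₀ F) :
    H.mulVec ⇑m = Finsupp.linearCombination F (fun f (i : Fin l) => H i f) m := by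
  rw [Finsupp.linearCombination_apply, Finsupp.sum_fintype _ _ (by intro f; simp)]
  funext i
  rw [Finset.sum_apply]
  simp only [Pi.smul_apply, smul_eq_mul]
  simp [Matrix.mulVec, dotProduct, mul_comm]

lemma exclusion (hH : ValidEncoder F X ε H) (k : 𝓚) (T : Finset 𝓕)
    (hTX : ∀ f ∈ T, f ∈ X k) (hTcard : T.card ≤ 2 * ε)
    (m p : 𝓕 →₀ F) (hm : ∀ f ∈ m.support, f ∈ T) (hp : ∀ f ∈ p.support, f ∉ X k)
    (heq : Finsupp.linearCombination F (fun f (i : Fin l) => H i f) m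
         = Finsupp.linearCombination F (fun f (i : Fin l) => H i f) p) :
    m = 0 := by
  classical
  set d : 𝓕 → F := ⇑(m - p) with hdd
  have hd0 : H.mulVec d = 0 := by
    rw [hdd, mulVec_eq_lc, map_sub, heq]
    simp
  have hpz : ∀ f ∈ X k, p f = 0 := by
    intro f hf
    by_contra hpf
    exact hp f (Finsupp.mem_support_iff.mpr hpf) hf
  have hwt : {f | f ∈ X k ∧ d f ≠ 0}.ncard ≤ 2 * ε := by
    have hsub : {f | f ∈ X k ∧ d f ≠ 0} ⊆ ↑T := by
      intro f hf
      obtain ⟨hfX, hfd⟩ := hf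
      have : d f = m f := by rw [hdd]; simp [Finsupp.sub_apply, hpz f hfX]
      rw [this] at hfd
      exact hm f (Finsupp.mem_support_iff.mpr hfd)
    calc {f | f ∈ X k ∧ d f ≠ 0}.ncard ≤ (↑T : Set 𝓕).ncard :=
          Set.ncard_le_ncard hsub T.finite_toSet
      _ = T.card := Set.ncard_coe_finset T
      _ ≤ 2 * ε := hTcard
  have hker := ker_cond hH k d hd0 hwt
  ext f
  by_cases hfm : m f = 0
  · simp [hfm]
  · have hfT : f ∈ T := hm f (Finsupp.mem_support_iff.mpr hfm)
    have hfX : f ∈ X k := hTX f hfT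
    have := hker f hfX
    rw [hdd] at this
    simp only [Finsupp.coe_sub, Pi.sub_apply, hpz f hfX, sub_zero] at this
    exact absurd this hfm

lemma union_indep [DecidableEq 𝓕] (hH : ValidEncoder F X ε H) (k : 𝓚) (s T : Finset 𝓕)
    (hs : ∀ mm : 𝓕 →₀ F, (∀ f ∈ mm.support, f ∈ s) →
      Finsupp.linearCombination F (fun f (i : Fin l) => H i f) mm = 0 → mm = 0)
    (hsX : ∀ f ∈ s, f ∉ X k) (hTX : ∀ f ∈ T, f ∈ X k) (hTc : T.card ≤ 2 * ε) :
    ∀ mm : 𝓕 →₀ F, (∀ f ∈ mm.support, f ∈ s ∪ T) →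
      Finsupp.linearCombination F (fun f (i : Fin l) => H i f) mm = 0 → mm = 0 := by
  classical
  intro mm hsupp hlc
  set m1 := mm.filter (fun f => f ∈ T) with hm1
  set m2 := mm.filter (fun f => f ∉ T) with hm2
  have hsplit : m1 + m2 = mm := Finsupp.filter_pos_add_filter_neg mm _
  have hm1s : ∀ f ∈ m1.support, f ∈ T := by
    intro f hf
    rw [hm1, Finsupp.support_filter, Finset.mem_filter] at hf
    exact hf.2
  have hm2s : ∀ f ∈ m2.support, f ∈ s := by
    intro f hf
    rw [hm2, Finsupp.support_filter, Finset.mem_filter] at hf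
    rcases Finset.mem_union.mp (hsupp f hf.1) with h | h
    · exact h
    · exact absurd h hf.2
  have heq : Finsupp.linearCombination F (fun f (i : Fin l) => H i f) m1
      = Finsupp.linearCombination F (fun f (i : Fin l) => H i f) (-m2) := by
    have : Finsupp.linearCombination F (fun f (i : Fin l) => H i f) m1
        + Finsupp.linearCombination F (fun f (i : Fin l) => H i f) m2 = 0 := by
      rw [← map_add, hsplit, hlc]
    rw [map_neg]
    exact eq_neg_of_add_eq_zero_left this
  have hm1z : m1 = 0 := by
    refine exclusion hH k T hTX hTc m1 (-m2) hm1s ?_ heq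
    intro f hf
    rw [Finsupp.support_neg] at hf
    exact hsX f (hm2s f hf)
  have hmm : mm = m2 := by rw [← hsplit, hm1z, zero_add]
  refine hs mm ?_ hlc
  intro f hf
  rw [hmm] at hf
  exact hm2s f hf

lemma ind_card_le (H : Matrix (Fin l) 𝓕 F) (s : Finset 𝓕)
    (hs : ∀ mm : 𝓕 →₀ F, (∀ f ∈ mm.support, f ∈ s) →
      Finsupp.linearCombination F (fun f (i : Fin l) => H i f) mm = 0 → mm = 0) :
    s.card ≤ l := by
  classical
  have hli : LinearIndependent F
      ((fun f (i : Fin l) => H i f) ∘ (Subtype.val : (↑s : Set 𝓕) → 𝓕)) := by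
    rw [linearIndependent_comp_subtype_iff, linearIndepOn_iff]
    intro m hm hlc
    refine hs m (fun f hf => ?_) hlc
    have := (Finsupp.mem_supported F m).mp hm hf
    simpa using this
  have hcard := hli.fintype_card_le_finrank
  have h1 : Fintype.card (↑s : Set 𝓕) = s.card := by
    simpa using Set.ncard_coe_finset s ▸ (Set.ncard_eq_toFinset_card' (↑s : Set 𝓕)) ▸ rfl
  have h2 : Module.finrank F (Fin l → F) = l := by
    rw [Module.finrank_pi]
    exact Fintype.card_fin l
  rw [h1, h2] at hcard
  exact hcard

end Core

/-- For the Shangguan et al. Construction-I placement with parameters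
`n, a, b`, assume `ε ≥ 1` and `Z = C(n,a) − C(n−b,a) ≥ 2ε + 1`, and let `a₀` be the
smallest integer with `C(a₀, a−1) ≥ 2ε`. If `a₀ ≤ n − b`, then
`ℓ*(X, ε) ≥ 2ε(n − b − a₀ + 1) + C(a₀, a)`. -/
theorem shangguan_lower_bound_a0 (n a b : ℕ) (ha : 0 < a) (hb : 0 < b) (hab : a + b ≤ n)
    (ε : ℕ) (hε : 1 ≤ ε)
    (hZ : 2 * ε + 1 ≤ Nat.choose n a - Nat.choose (n - b) a)
    (a₀ : ℕ) (ha₀ : 2 * ε ≤ Nat.choose a₀ (a - 1))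
    (ha₀min : ∀ j : ℕ, j < a₀ → Nat.choose j (a - 1) < 2 * ε)
    (ha₀nb : a₀ ≤ n - b) :
    2 * ε * (n - b - a₀ + 1) + Nat.choose a₀ a ≤
      optLen (fun k : {s : Finset (Fin n) // s.card = b} =>
        Finset.univ.filter (fun f : {s : Finset (Fin n) // s.card = a} =>
          (f.1 ∩ k.1).Nonempty)) ε := by
  classical
  set 𝓣 := {s : Finset (Fin n) // s.card = a} with h𝓣
  set 𝓚ty := {s : Finset (Fin n) // s.card = b} with h𝓚
  set X : 𝓚ty → Finset 𝓣 := fun k =>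
    Finset.univ.filter (fun f : 𝓣 => (f.1 ∩ k.1).Nonempty) with hX
  have hmemX : ∀ (k : 𝓚ty) (f : 𝓣), f ∈ X k ↔ (f.1 ∩ k.1).Nonempty := by
    intro k f
    simp [hX]
  -- basic arithmetic facts
  have hbn : b ≤ n := le_trans (Nat.le_add_left b a) hab
  have han : a ≤ n := le_trans (Nat.le_add_right a b) hab
  have ha₀pos : 0 < a₀ := by
    by_contra h0
    push_neg at h0
    interval_cases a₀
    have := ha₀min  -- unused
    have : Nat.choose 0 (a - 1) ≤ 1 := by
      rcases Nat.eq_zero_or_pos (a - 1) with h | h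
      · simp [h]
      · simp [Nat.choose_eq_zero_of_lt h]
    omega
  rw [optLen]
  apply le_csInf
  · obtain ⟨l₀, F₀, i1, i2, H₀, hH₀⟩ := exists_valid_encoder X ε
    exact ⟨l₀, F₀, i1, i2, H₀, hH₀⟩
  rintro l ⟨F, inst1, inst2, H, hH⟩
  -- notation
  set c : 𝓣 → (Fin l → F) := fun f i => H i f with hc
  set lc : (𝓣 →₀ F) → (Fin l → F) :=
    fun mm => Finsupp.linearCombination F (fun f (i : Fin l) => H i f) mm with hlcdef
  set lows : ℕ → Finset (Fin n) := fun j => univ.filter (fun x : Fin n => (x : ℕ) < j)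
    with hlows
  have hlows_mem : ∀ (j : ℕ) (x : Fin n), x ∈ lows j ↔ (x : ℕ) < j := by
    intro j x
    simp [hlows]
  set Ind : Finset 𝓣 → Prop := fun s =>
    ∀ mm : 𝓣 →₀ F, (∀ f ∈ mm.support, f ∈ s) →
      Finsupp.linearCombination F (fun f (i : Fin l) => H i f) mm = 0 → mm = 0
    with hInd
  -- the top b-1 elements
  set topb1 : Finset (Fin n) := univ.filter (fun x : Fin n => n - b + 1 ≤ (x : ℕ)) with htopb1
  have htopb1card : topb1.card = b - 1 := by
    rw [htopb1, card_filter_le_fin]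
    omega
  -- base case
  have base : ∃ s : Finset 𝓣, (∀ f ∈ s, f.1 ⊆ lows a₀) ∧
      s.card = Nat.choose a₀ a + 2 * ε * 0 ∧ Ind s := by
    refine ⟨univ.filter (fun f : 𝓣 => f.1 ⊆ lows a₀), ?_, ?_, ?_⟩
    · intro f hf
      exact (Finset.mem_filter.mp hf).2
    · rw [count_subsets n a (lows a₀), hlows, card_filter_lt_fin n a₀ (by omega)]
      omega
    · intro mm hsupp hlc0
      by_contra hne
      obtain ⟨f₀, hf₀⟩ := Finsupp.support_nonempty_iff.mpr hne
      have hf₀s := hsupp f₀ hf₀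
      have hf₀sub : f₀.1 ⊆ lows a₀ := (Finset.mem_filter.mp hf₀s).2
      obtain ⟨i, hi⟩ := Finset.card_pos.mp (by rw [f₀.2]; exact ha)
      have hia₀ : (i : ℕ) < a₀ := (hlows_mem a₀ i).mp (hf₀sub hi)
      have hitop : i ∉ topb1 := by
        rw [htopb1, Finset.mem_filter]
        push_neg
        intro _
        omega
      have hkcard : (insert i topb1).card = b := by
        rw [Finset.card_insert_of_notMem hitop, htopb1card]
        omega
      set k : 𝓚ty := ⟨insert i topb1, hkcard⟩ with hk
      have hk1 : k.1 = insert i topb1 := rfl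
      -- split mm
      set m1 := mm.filter (fun f : 𝓣 => i ∈ f.1) with hm1
      set m2 := mm.filter (fun f : 𝓣 => i ∉ f.1) with hm2
      have hsplit : m1 + m2 = mm := Finsupp.filter_pos_add_filter_neg mm _
      set T : Finset 𝓣 := univ.filter (fun f : 𝓣 => f.1 ⊆ lows a₀ ∧ i ∈ f.1) with hT
      have hTX : ∀ f ∈ T, f ∈ X k := by
        intro f hf
        rw [hT, Finset.mem_filter] at hf
        rw [hmemX]
        exact ⟨i, Finset.mem_inter.mpr ⟨hf.2.2, by rw [hk1]; exact Finset.mem_insert_self i topb1⟩⟩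
      have hTcard : T.card ≤ 2 * ε := by
        have hilows : i ∈ lows a₀ := (hlows_mem a₀ i).mpr hia₀
        have hie : i ∉ (lows a₀).erase i := Finset.notMem_erase i _
        have hinsert : insert i ((lows a₀).erase i) = lows a₀ := Finset.insert_erase hilows
        have hTeq : T = univ.filter
            (fun f : 𝓣 => f.1 ⊆ insert i ((lows a₀).erase i) ∧ i ∈ f.1) := by
          rw [hT, hinsert]
        rw [hTeq, count_subsets_mem n a ha ((lows a₀).erase i) i hie]
        have hcerase : ((lows a₀).erase i).card = a₀ - 1 := by
          rw [Finset.card_erase_of_mem hilows, hlows, card_filter_lt_fin n a₀ (by omega)]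
        rw [hcerase]
        exact le_of_lt (ha₀min (a₀ - 1) (by omega))
      have hm1s : ∀ f ∈ m1.support, f ∈ T := by
        intro f hf
        rw [hm1, Finsupp.support_filter, Finset.mem_filter] at hf
        rw [hT, Finset.mem_filter]
        exact ⟨Finset.mem_univ f, (Finset.mem_filter.mp (hsupp f hf.1)).2, hf.2⟩
      have hm2X : ∀ f ∈ m2.support, f ∉ X k := by
        intro f hf
        rw [hm2, Finsupp.support_filter, Finset.mem_filter] at hf
        have hfsub : f.1 ⊆ lows a₀ := (Finset.mem_filter.mp (hsupp f hf.1)).2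
        rw [hmemX]
        rintro ⟨x, hx⟩
        rw [Finset.mem_inter] at hx
        have hxl : (x : ℕ) < a₀ := (hlows_mem a₀ x).mp (hfsub hx.1)
        rw [hk1] at hx
        rcases Finset.mem_insert.mp hx.2 with h | h
        · exact hf.2 (h ▸ hx.1)
        · rw [htopb1, Finset.mem_filter] at h
          omega
      have heqc : Finsupp.linearCombination F (fun f (i : Fin l) => H i f) m1
          = Finsupp.linearCombination F (fun f (i : Fin l) => H i f) (-m2) := by
        have : Finsupp.linearCombination F (fun f (i : Fin l) => H i f) m1
            + Finsupp.linearCombination F (fun f (i : Fin l) => H i f) m2 = 0 := by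
          rw [← map_add, hsplit, hlc0]
        rw [map_neg]
        exact eq_neg_of_add_eq_zero_left this
      have hm1z : m1 = 0 := by
        refine exclusion hH k T hTX hTcard m1 (-m2) hm1s ?_ heqc
        intro f hf
        rw [Finsupp.support_neg] at hf
        exact hm2X f hf
      have : m1 f₀ ≠ 0 := by
        rw [hm1, Finsupp.filter_apply, if_pos hi]
        exact Finsupp.mem_support_iff.mp hf₀
      rw [hm1z] at this
      simp at this
  -- inductive step
  have step : ∀ i : ℕ, a₀ + i < n - b →
      (∃ s : Finset 𝓣, (∀ f ∈ s, f.1 ⊆ lows (a₀ + i)) ∧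
        s.card = Nat.choose a₀ a + 2 * ε * i ∧ Ind s) →
      (∃ s : Finset 𝓣, (∀ f ∈ s, f.1 ⊆ lows (a₀ + i + 1)) ∧
        s.card = Nat.choose a₀ a + 2 * ε * (i + 1) ∧ Ind s) := by
    intro i hilt ⟨s, hssub, hscard, hsind⟩
    set j := a₀ + i with hj
    have hjn : j < n := by omega
    set xj : Fin n := ⟨j, hjn⟩ with hxj
    have hxjlows : xj ∉ lows j := by
      rw [hlows_mem]
      simp [hxj]
    set Sj : Finset 𝓣 := univ.filter (fun f : 𝓣 => f.1 ⊆ insert xj (lows j) ∧ xj ∈ f.1)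
      with hSj
    have hSjcard : 2 * ε ≤ Sj.card := by
      rw [hSj, count_subsets_mem n a ha (lows j) xj hxjlows, hlows,
        card_filter_lt_fin n j (by omega)]
      calc 2 * ε ≤ Nat.choose a₀ (a - 1) := ha₀
        _ ≤ Nat.choose j (a - 1) := Nat.choose_le_choose (a - 1) (by omega)
    obtain ⟨T, hTsub, hTcard⟩ := Finset.exists_subset_card_eq hSjcard
    have hxjtop : xj ∉ topb1 := by
      rw [htopb1, Finset.mem_filter]
      push_neg
      intro _
      simp only [hxj]
      omega
    have hkcard : (insert xj topb1).card = b := by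
      rw [Finset.card_insert_of_notMem hxjtop, htopb1card]
      omega
    set k : 𝓚ty := ⟨insert xj topb1, hkcard⟩ with hk
    have hk1 : k.1 = insert xj topb1 := rfl
    have hsX : ∀ f ∈ s, f ∉ X k := by
      intro f hf
      have hfsub := hssub f hf
      rw [hmemX]
      rintro ⟨x, hx⟩
      rw [Finset.mem_inter] at hx
      have hxl : (x : ℕ) < j := (hlows_mem j x).mp (hfsub hx.1)
      rw [hk1] at hx
      rcases Finset.mem_insert.mp hx.2 with h | h
      · rw [h] at hxl
        simp [hxj] at hxl
      · rw [htopb1, Finset.mem_filter] at h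
        omega
    have hTX : ∀ f ∈ T, f ∈ X k := by
      intro f hf
      have := hTsub hf
      rw [hSj, Finset.mem_filter] at this
      rw [hmemX]
      exact ⟨xj, Finset.mem_inter.mpr ⟨this.2.2, by rw [hk1]; exact Finset.mem_insert_self xj topb1⟩⟩
    have hind' : Ind (s ∪ T) :=
      union_indep hH k s T hsind hsX hTX (le_of_eq hTcard)
    refine ⟨s ∪ T, ?_, ?_, hind'⟩
    · intro f hf
      have hmono : lows j ⊆ lows (j + 1) := by
        intro x hx
        rw [hlows_mem] at hx ⊢
        omega
      rcases Finset.mem_union.mp hf with h | h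
      · exact (hssub f h).trans hmono
      · have := hTsub h
        rw [hSj, Finset.mem_filter] at this
        refine this.2.1.trans ?_
        intro x hx
        rcases Finset.mem_insert.mp hx with h' | h'
        · rw [hlows_mem, h']
          simp [hxj]
        · exact hmono h'
    · have hdisj : Disjoint s T := by
        rw [Finset.disjoint_left]
        intro f hfs hfT
        have h1 := hssub f hfs
        have h2 := hTsub hfT
        rw [hSj, Finset.mem_filter] at h2
        have := (hlows_mem j xj).mp (h1 h2.2.2)
        simp [hxj] at this
      rw [Finset.card_union_of_disjoint hdisj, hscard, hTcard]
      ring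
  -- iterate
  have main : ∀ i : ℕ, a₀ + i ≤ n - b →
      ∃ s : Finset 𝓣, (∀ f ∈ s, f.1 ⊆ lows (a₀ + i)) ∧
        s.card = Nat.choose a₀ a + 2 * ε * i ∧ Ind s := by
    intro i
    induction i with
    | zero => intro _; simpa using base
    | succ i ih =>
      intro hle
      have h1 : a₀ + i < n - b := by omega
      exact step i h1 (ih (by omega))
  obtain ⟨s, hssub, hscard, hsind⟩ := main (n - b - a₀) (by omega)
  have hnba : a₀ + (n - b - a₀) = n - b := by omega
  rw [hnba] at hssub
  -- final step with the top b elements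
  set k0set : Finset (Fin n) := univ.filter (fun x : Fin n => n - b ≤ (x : ℕ)) with hk0set
  have hk0card : k0set.card = b := by
    rw [hk0set, card_filter_le_fin]
    omega
  set k0 : 𝓚ty := ⟨k0set, hk0card⟩ with hk0
  have hk01 : ∀ x : Fin n, x ∈ k0.1 ↔ n - b ≤ (x : ℕ) := by
    intro x
    rw [hk0]
    simp [hk0set]
  have hXk0card : 2 * ε ≤ (X k0).card := by
    have hcompl : X k0 = univ \ univ.filter (fun f : 𝓣 => f.1 ⊆ lows (n - b)) := by
      rw [hX]
      ext f
      simp only [Finset.mem_filter, Finset.mem_univ, true_and, Finset.mem_sdiff]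
      constructor
      · rintro ⟨x, hx⟩
        rw [Finset.mem_inter] at hx
        intro hsub
        have h1 := (hlows_mem (n - b) x).mp (hsub hx.1)
        have h2 := (hk01 x).mp hx.2
        omega
      · intro hnsub
        rw [Finset.not_subset] at hnsub
        obtain ⟨x, hxf, hxl⟩ := hnsub
        refine ⟨x, Finset.mem_inter.mpr ⟨hxf, ?_⟩⟩
        rw [hk01]
        rw [hlows_mem] at hxl
        omega
    rw [hcompl, Finset.card_sdiff_of_subset (Finset.filter_subset _ _)]
    rw [count_subsets n a (lows (n - b)), hlows, card_filter_lt_fin n (n - b) (by omega)]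
    have huniv : (univ : Finset 𝓣).card = Nat.choose n a := by
      have : (univ : Finset 𝓣) = univ.filter (fun f : 𝓣 => f.1 ⊆ (univ : Finset (Fin n))) := by
        ext f
        simp [Finset.subset_univ]
      rw [this, count_subsets n a univ, Finset.card_univ, Fintype.card_fin]
    rw [huniv]
    omega
  obtain ⟨T, hTsub, hTcard⟩ := Finset.exists_subset_card_eq hXk0card
  have hsX : ∀ f ∈ s, f ∉ X k0 := by
    intro f hf
    have hfsub := hssub f hf
    rw [hmemX]
    rintro ⟨x, hx⟩
    rw [Finset.mem_inter] at hx
    have h1 := (hlows_mem (n - b) x).mp (hfsub hx.1)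
    have h2 := (hk01 x).mp hx.2
    omega
  have hTX : ∀ f ∈ T, f ∈ X k0 := fun f hf => hTsub hf
  have hfinal : Ind (s ∪ T) :=
    union_indep hH k0 s T hsind hsX hTX (le_of_eq hTcard)
  have hdisj : Disjoint s T := by
    rw [Finset.disjoint_left]
    intro f hfs hfT
    exact hsX f hfs (hTsub hfT)
  have hcard := ind_card_le H (s ∪ T) hfinal
  rw [Finset.card_union_of_disjoint hdisj, hscard, hTcard] at hcard
  have harith : 2 * ε * (n - b - a₀ + 1) + Nat.choose a₀ a
      = Nat.choose a₀ a + 2 * ε * (n - b - a₀) + 2 * ε := by ring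
  omega
end

section
/- Consider the placement with subfile index set 𝓕 = {1,…,n}, node index set 𝓚 equal to the b-element subsets of {1,…,n}, and X_k = k for each node k (a subfile f is cached at node k if and only if f ∈ k), where 1 ≤ b ≤ n − 1. If ε ≥ 1 and b ≥ 2ε + 1, then the optimal codelength is exactly ℓ*(X,ε) = 2ε + n − b. -/
open Matrix Finset

/- ### Auxiliary lemmas -/

lemma aux_ncard_le_of_subset_finset {α : Type*} {s : Set α} {t : Finset α} (h : s ⊆ ↑t) :
    s.ncard ≤ t.card := by
  rw [← Set.ncard_coe_finset]
  exact Set.ncard_le_ncard h t.finite_toSet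

lemma aux_ncard_support_eq {F : Type} [Zero F] {n : ℕ} (z : Fin n → F)
    [DecidablePred fun f : Fin n => z f ≠ 0] :
    {f | z f ≠ 0}.ncard = (Finset.univ.filter fun f : Fin n => z f ≠ 0).card := by
  rw [← Set.ncard_coe_finset]
  congr 1
  ext f
  simp

/-- Necessity: a valid encoder forces every nonzero kernel vector to have weight
`> 2ε + (n-b)`. -/
lemma aux_valid_to_ker {n b ε l : ℕ} {F : Type} [Field F] [Fintype F]
    (hb1 : 1 ≤ b) (hbn : b + 1 ≤ n) (hbe : 2 * ε + 1 ≤ b) (hε : 1 ≤ ε)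
    (H : Matrix (Fin l) (Fin n) F)
    (hv : ValidEncoder F
      (fun k : {s : Finset (Fin n) // s.card = b} => (k.1 : Finset (Fin n))) ε H) :
    ∀ z : Fin n → F, H.mulVec z = 0 → {f | z f ≠ 0}.ncard ≤ 2 * ε + (n - b) → z = 0 := by
  classical
  intro z hz hwt
  by_contra hz0
  set S : Finset (Fin n) := Finset.univ.filter (fun f => z f ≠ 0) with hSdef
  have hScard : S.card ≤ 2 * ε + (n - b) := by
    rw [← aux_ncard_support_eq] ; exact hwt
  have hSn : S.card ≤ n := by
    have := Finset.card_le_univ S ; simpa using this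
  have hSne : S.Nonempty := by
    obtain ⟨f, hf⟩ := Function.ne_iff.mp hz0
    exact ⟨f, by simp [hSdef] ; exact hf⟩
  have hS1 : 1 ≤ S.card := Finset.card_pos.mpr hSne
  set m := min S.card (2 * ε) with hm
  have hmS : m ≤ S.card := min_le_left _ _
  obtain ⟨A, hAS, hAcard⟩ := Finset.exists_subset_card_eq hmS
  have hA1le : min m ε ≤ A.card := by rw [hAcard] ; exact min_le_left _ _
  obtain ⟨A1, hA1A, hA1card⟩ := Finset.exists_subset_card_eq hA1le
  set A2 := A \ A1 with hA2def
  have hcompl : Sᶜ.card = n - S.card := by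
    rw [Finset.card_compl] ; simp
  have hBle : b - m ≤ Sᶜ.card := by rw [hcompl] ; omega
  obtain ⟨B, hBS, hBcard⟩ := Finset.exists_subset_card_eq hBle
  have hdisj : Disjoint A B := by
    refine Finset.disjoint_left.mpr fun x hxA hxB => ?_
    have : x ∈ Sᶜ := hBS hxB
    exact (Finset.mem_compl.mp this) (hAS hxA)
  have hkcard : (A ∪ B).card = b := by
    rw [Finset.card_union_of_disjoint hdisj, hAcard, hBcard] ; omega
  set k : {s : Finset (Fin n) // s.card = b} := ⟨A ∪ B, hkcard⟩ with hk
  -- the two error vectors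
  set e : Fin n → F := fun f => if f ∈ A1 then z f else 0 with he_def
  set e' : Fin n → F := fun f => if f ∈ A2 then -(z f) else 0 with he'_def
  have hwe : {f | e f ≠ 0}.ncard ≤ ε := by
    refine le_trans (aux_ncard_le_of_subset_finset (t := A1) ?_) ?_
    · intro f hf
      simp only [Set.mem_setOf_eq, he_def] at hf
      by_cases h : f ∈ A1
      · exact Finset.mem_coe.mpr h
      · simp [h] at hf
    · rw [hA1card] ; exact min_le_right _ _
  have hwe' : {f | e' f ≠ 0}.ncard ≤ ε := by
    refine le_trans (aux_ncard_le_of_subset_finset (t := A2) ?_) ?_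
    · intro f hf
      simp only [Set.mem_setOf_eq, he'_def] at hf
      by_cases h : f ∈ A2
      · exact Finset.mem_coe.mpr h
      · simp [h] at hf
    · have : A2.card = m - min m ε := by
        rw [hA2def, Finset.card_sdiff_of_subset hA1A, hAcard, hA1card]
      rw [this] ; omega
  obtain ⟨D, hD⟩ := hv k
  have h1 := hD (z - e) e hwe
  have h2 := hD (-e') e' hwe'
  rw [sub_add_cancel] at h1
  rw [neg_add_cancel] at h2
  have hz0' : H.mulVec (0 : Fin n → F) = 0 := Matrix.mulVec_zero H
  rw [hz] at h1
  rw [hz0'] at h2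
  -- the side informations agree
  have hside : (fun f : {f // f ∈ (k.1 : Finset (Fin n))} => (z - e) f.1)
      = fun f => (-e') f.1 := by
    funext f
    obtain ⟨f, hf⟩ := f
    simp only [Pi.sub_apply, Pi.neg_apply]
    have hf' : f ∈ A ∪ B := hf
    rcases Finset.mem_union.mp hf' with hfA | hfB
    · by_cases h1' : f ∈ A1
      · have h2' : f ∉ A2 := by simp [hA2def, h1']
        simp [he_def, he'_def, h1', h2']
      · have h2' : f ∈ A2 := by simp [hA2def, hfA, h1']
        simp [he_def, he'_def, h1', h2']
    · have hfS : f ∉ S := Finset.mem_compl.mp (hBS hfB)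
      have hzf : z f = 0 := by
        by_contra h
        exact hfS (by simp [hSdef, h])
      have h1' : f ∉ A1 := fun h => hfS (hAS (hA1A h))
      have h2' : f ∉ A2 := fun h => hfS (hAS (Finset.mem_sdiff.mp h).1)
      simp [he_def, he'_def, h1', h2', hzf]
  rw [hside] at h1
  rw [h2] at h1
  -- contradiction: z vanishes on A, but A ⊆ S is nonempty
  have hAne : A.Nonempty := Finset.card_pos.mp (by omega)
  obtain ⟨a, haA⟩ := hAne
  have hak : a ∈ (k.1 : Finset (Fin n)) := Finset.mem_union_left _ haA
  have := congrFun h1 ⟨a, hak⟩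
  simp only [Pi.zero_apply] at this
  have haS : a ∈ S := hAS haA
  rw [hSdef] at haS
  simp at haS
  exact haS this.symm

/-- Sufficiency: the kernel distance property yields a valid encoder. -/
lemma aux_ker_to_valid {n b ε l : ℕ} {F : Type} [Field F] [Fintype F]
    (hbn : b ≤ n)
    (H : Matrix (Fin l) (Fin n) F)
    (hker : ∀ z : Fin n → F, H.mulVec z = 0 →
      {f | z f ≠ 0}.ncard ≤ 2 * ε + (n - b) → z = 0) :
    ValidEncoder F
      (fun k : {s : Finset (Fin n) // s.card = b} => (k.1 : Finset (Fin n))) ε H := by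
  classical
  intro k
  refine ⟨fun y v => if h : ∃ u : Fin n → F, H.mulVec u = y ∧ ∃ e : Fin n → F,
      {f | e f ≠ 0}.ncard ≤ ε ∧ ∀ f : {f // f ∈ (k.1 : Finset (Fin n))}, u f.1 - e f.1 = v f
    then fun f => h.choose f.1 else 0, ?_⟩
  intro w e he
  have hex : ∃ u : Fin n → F, H.mulVec u = H.mulVec (w + e) ∧ ∃ e' : Fin n → F,
      {f | e' f ≠ 0}.ncard ≤ ε ∧
      ∀ f : {f // f ∈ (k.1 : Finset (Fin n))}, u f.1 - e' f.1 = w f.1 :=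
    ⟨w + e, rfl, e, he, fun f => by simp⟩
  beta_reduce
  rw [dif_pos hex]
  obtain ⟨hu, e₀, he₀, hag⟩ := hex.choose_spec
  set u := hex.choose with hudef
  -- the difference vector lies in the kernel
  have hzker : H.mulVec (u - (w + e)) = 0 := by
    rw [Matrix.mulVec_sub, hu, sub_self]
  have hzk : ∀ f ∈ (k.1 : Finset (Fin n)), (u - (w + e)) f = e₀ f - e f := by
    intro f hf
    have h := hag ⟨f, hf⟩
    simp only at h
    simp only [Pi.sub_apply, Pi.add_apply]
    linear_combination h
  -- the difference has small weight
  have hzwt : {f | (u - (w + e)) f ≠ 0}.ncard ≤ 2 * ε + (n - b) := by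
    set T : Finset (Fin n) := Finset.univ.filter (fun f => (u - (w + e)) f ≠ 0) with hT
    rw [aux_ncard_support_eq]
    by_contra hbig
    push_neg at hbig
    have hsub : T ∩ k.1 ⊆ (Finset.univ.filter (fun f => e₀ f ≠ 0)) ∪
        (Finset.univ.filter (fun f => e f ≠ 0)) := by
      intro f hf
      obtain ⟨hfT, hfk⟩ := Finset.mem_inter.mp hf
      have hne : (u - (w + e)) f ≠ 0 := by
        rw [hT] at hfT ; simpa using hfT
      have := hzk f hfk
      rw [this] at hne
      by_contra hcon
      simp only [Finset.mem_union, Finset.mem_filter, Finset.mem_univ, true_and] at hcon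
      push_neg at hcon
      rw [hcon.1, hcon.2, sub_zero] at hne
      exact hne rfl
    have hcup : ((Finset.univ.filter (fun f => e₀ f ≠ 0)) ∪
        (Finset.univ.filter (fun f => e f ≠ 0))).card ≤ 2 * ε := by
      refine le_trans (Finset.card_union_le _ _) ?_
      have h1 : (Finset.univ.filter (fun f : Fin n => e₀ f ≠ 0)).card ≤ ε := by
        rw [← aux_ncard_support_eq] ; exact he₀
      have h2 : (Finset.univ.filter (fun f : Fin n => e f ≠ 0)).card ≤ ε := by
        rw [← aux_ncard_support_eq] ; exact he
      omega
    have hTk : (T ∩ k.1).card ≤ 2 * ε := le_trans (Finset.card_le_card hsub) hcup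
    have hsplit := Finset.card_inter_add_card_sdiff T k.1
    have hsd : (T \ k.1).card ≤ n - b := by
      have h1 : T \ k.1 ⊆ (k.1 : Finset (Fin n))ᶜ :=
        fun x hx => Finset.mem_compl.mpr (Finset.mem_sdiff.mp hx).2
      have h2 : ((k.1 : Finset (Fin n))ᶜ).card = n - b := by
        rw [Finset.card_compl, k.2] ; simp
      rw [← h2]
      exact Finset.card_le_card h1
    have hbig' : 2 * ε + (n - b) < T.card := by rw [hT] ; exact hbig
    omega
  have hzero := hker _ hzker hzwt
  have hu_eq : u = w + e := by
    have := sub_eq_zero.mp hzero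
    exact this
  funext f
  rw [hu_eq]

/-- The Vandermonde parity-check matrix has the required kernel distance property. -/
lemma aux_vand_ker {l n p : ℕ} [Fact p.Prime] (hnp : n ≤ p) :
    ∀ z : Fin n → ZMod p,
      (Matrix.of fun (i : Fin l) (j : Fin n) => ((j : ℕ) : ZMod p) ^ (i : ℕ)).mulVec z = 0 →
      {f | z f ≠ 0}.ncard ≤ l → z = 0 := by
  classical
  intro z hz hwt
  set S : Finset (Fin n) := Finset.univ.filter (fun f => z f ≠ 0) with hSdef
  have hScard : S.card ≤ l := by rw [← aux_ncard_support_eq] ; exact hwt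
  set s := S.card with hs
  set σ := S.orderIsoOfFin (rfl : S.card = s) with hσ
  set v : Fin s → ZMod p := fun j => ((σ j : Fin n) : ℕ) with hv
  have hvinj : Function.Injective v := by
    intro a b hab
    have h1 : ((σ a : Fin n) : ℕ) < p := lt_of_lt_of_le (σ a).1.2 hnp
    have h2 : ((σ b : Fin n) : ℕ) < p := lt_of_lt_of_le (σ b).1.2 hnp
    have := congrArg ZMod.val hab
    rw [hv] at hab
    have hval : ((σ a : Fin n) : ℕ) = ((σ b : Fin n) : ℕ) := by
      have := congrArg ZMod.val hab
      rwa [ZMod.val_cast_of_lt h1, ZMod.val_cast_of_lt h2] at this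
    have : (σ a : Fin n) = (σ b : Fin n) := Fin.val_injective hval
    have : σ a = σ b := Subtype.ext this
    exact σ.injective this
  set M : Matrix (Fin s) (Fin s) (ZMod p) := (Matrix.vandermonde v)ᵀ with hM
  have hdet : M.det ≠ 0 := by
    rw [hM, Matrix.det_transpose, Matrix.det_vandermonde]
    rw [Finset.prod_ne_zero_iff]
    intro i _
    rw [Finset.prod_ne_zero_iff]
    intro j hj
    have hij : i < j := Finset.mem_Ioi.mp hj
    exact sub_ne_zero.mpr fun h => hij.ne' (hvinj h)
  have hfull : ∀ i' : Fin l, ∑ f : Fin n, ((f : ℕ) : ZMod p) ^ (i' : ℕ) * z f = 0 := by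
    intro i'
    have := congrFun hz i'
    simpa [Matrix.mulVec, dotProduct] using this
  have hMz : M.mulVec (fun j => z (σ j : Fin n)) = 0 := by
    funext i
    have hi : (i : ℕ) < l := lt_of_lt_of_le i.2 hScard
    have key : ∑ j : Fin s, v j ^ (i : ℕ) * z (σ j : Fin n)
        = ∑ f : Fin n, ((f : ℕ) : ZMod p) ^ (i : ℕ) * z f := by
      calc ∑ j : Fin s, v j ^ (i : ℕ) * z (σ j : Fin n)
          = ∑ x : {x // x ∈ S}, (((x : Fin n) : ℕ) : ZMod p) ^ (i : ℕ) * z (x : Fin n) :=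
            Equiv.sum_comp σ.toEquiv
              (fun x : {x // x ∈ S} => (((x : Fin n) : ℕ) : ZMod p) ^ (i : ℕ) * z (x : Fin n))
        _ = ∑ f ∈ S, ((f : ℕ) : ZMod p) ^ (i : ℕ) * z f :=
            Finset.sum_coe_sort S (fun f => ((f : ℕ) : ZMod p) ^ (i : ℕ) * z f)
        _ = ∑ f : Fin n, ((f : ℕ) : ZMod p) ^ (i : ℕ) * z f := by
            apply Finset.sum_subset (Finset.subset_univ S)
            intro f _ hfS
            have hz0 : z f = 0 := by
              by_contra h
              exact hfS (by rw [hSdef] ; simp [h])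
            rw [hz0, mul_zero]
    have : (M.mulVec (fun j => z (σ j : Fin n))) i
        = ∑ j : Fin s, v j ^ (i : ℕ) * z (σ j : Fin n) := by
      simp [hM, Matrix.mulVec, dotProduct, Matrix.vandermonde_apply,
        Matrix.transpose_apply]
    rw [Pi.zero_apply, this, key]
    exact hfull ⟨i, hi⟩
  have hc0 : (fun j => z (σ j : Fin n)) = 0 := by
    have hinv : M⁻¹.mulVec (M.mulVec (fun j => z (σ j : Fin n)))
        = (fun j => z (σ j : Fin n)) := by
      rw [Matrix.mulVec_mulVec, Matrix.nonsing_inv_mul M (isUnit_iff_ne_zero.mpr hdet),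
        Matrix.one_mulVec]
    rw [hMz, Matrix.mulVec_zero] at hinv
    exact hinv.symm
  funext f
  show z f = 0
  by_contra hf
  have hfS : f ∈ S := by rw [hSdef] ; simp [hf]
  have h := congrFun hc0 (σ.symm ⟨f, hfS⟩)
  simp only [Pi.zero_apply] at h
  rw [OrderIso.apply_symm_apply] at h
  exact hf h

/-- Lower bound: the kernel distance property forces `d ≤ l`. -/
lemma aux_ker_lb {n d l : ℕ} {F : Type} [Field F] [Fintype F] (hdn : d ≤ n)
    (H : Matrix (Fin l) (Fin n) F)
    (hker : ∀ z : Fin n → F, H.mulVec z = 0 → {f | z f ≠ 0}.ncard ≤ d → z = 0) :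
    d ≤ l := by
  classical
  set ext : (Fin d → F) → (Fin n → F) :=
    fun v => fun f => if h : (f : ℕ) < d then v ⟨f, h⟩ else 0 with hext
  have hinj : Function.Injective (fun v : Fin d → F => H.mulVec (ext v)) := by
    intro v v' hvv
    simp only at hvv
    have hdiff : ext v - ext v' = ext (v - v') := by
      funext f
      by_cases h : (f : ℕ) < d <;> simp [hext, h]
    have hz : H.mulVec (ext (v - v')) = 0 := by
      rw [← hdiff, Matrix.mulVec_sub, hvv, sub_self]
    have hsupp : {f | ext (v - v') f ≠ 0}.ncard ≤ d := by
      refine le_trans (aux_ncard_le_of_subset_finset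
        (t := Finset.univ.image (Fin.castLE hdn)) ?_) ?_
      · intro f hf
        simp only [Set.mem_setOf_eq, hext] at hf
        by_cases h : (f : ℕ) < d
        · simp only [Finset.coe_image, Set.mem_image, Finset.coe_univ, Set.image_univ,
            Set.mem_range]
          exact ⟨⟨f, h⟩, by ext ; simp⟩
        · simp [h] at hf
      · refine le_trans (Finset.card_image_le) ?_
        simp
    have h0 := hker _ hz hsupp
    funext i
    have := congrFun h0 (Fin.castLE hdn i)
    simp only [hext] at this
    have hi : ((Fin.castLE hdn i : Fin n) : ℕ) < d := i.2
    rw [dif_pos hi] at this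
    have : v ⟨i, i.2⟩ - v' ⟨i, i.2⟩ = 0 := by simpa using this
    have := sub_eq_zero.mp this
    simpa using this
  have hcard := Fintype.card_le_of_injective _ hinj
  simp only [Fintype.card_fun, Fintype.card_fin] at hcard
  have hq : 1 < Fintype.card F := Fintype.one_lt_card
  exact (Nat.pow_le_pow_iff_right hq).mp hcard

/-- For the placement with subfiles `{1,…,n}`, nodes the `b`-subsets of
`{1,…,n}`, and `X k = k` (the case `a = 1` of Shangguan et al. Construction-I, `Z = b`),
if `ε ≥ 1`, `1 ≤ b ≤ n − 1` and `b ≥ 2ε + 1`, then `ℓ*(X, ε) = 2ε + n − b`. -/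
theorem shangguan_a_eq_one_optLen (n b : ℕ) (hb1 : 1 ≤ b) (hbn : b ≤ n - 1)
    (ε : ℕ) (hε : 1 ≤ ε) (hbe : 2 * ε + 1 ≤ b) :
    optLen (fun k : {s : Finset (Fin n) // s.card = b} => (k.1 : Finset (Fin n))) ε =
      2 * ε + (n - b) := by
  have hbn' : b + 1 ≤ n := by omega
  set l0 := 2 * ε + (n - b) with hl0
  have hl0n : l0 ≤ n := by omega
  -- membership: the Vandermonde construction achieves l0
  have hmem : l0 ∈ {l : ℕ | ∃ (F : Type) (inst1 : Field F) (inst2 : Fintype F)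
      (H : Matrix (Fin l) (Fin n) F),
      @ValidEncoder (Fin n) {s : Finset (Fin n) // s.card = b} _ F inst1 inst2
        (fun k => (k.1 : Finset (Fin n))) ε l H} := by
    obtain ⟨p, hnp, hp⟩ := Nat.exists_infinite_primes n
    haveI : Fact p.Prime := ⟨hp⟩
    refine ⟨ZMod p, inferInstance, inferInstance,
      Matrix.of fun (i : Fin l0) (j : Fin n) => ((j : ℕ) : ZMod p) ^ (i : ℕ), ?_⟩
    apply aux_ker_to_valid (by omega)
    intro z hz hwt
    exact aux_vand_ker hnp z hz hwt
  rw [optLen]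
  apply le_antisymm
  · exact Nat.sInf_le hmem
  · refine le_csInf ⟨l0, hmem⟩ ?_
    rintro l ⟨F, inst1, inst2, H, hH⟩
    letI := inst1
    letI := inst2
    exact aux_ker_lb hl0n H (aux_valid_to_ker hb1 hbn' hbe hε H hH)
end

section
/- For the Maddah-Ali & Niesen placement with parameters K and t, assume ε ≥ 1, 2 ≤ t ≤ K − 1, 2ε ≤ t, and C(K−1, t−1) ≥ 2ε + 1. Then the optimal codelength is exactly ℓ*(X,ε) = 2ε(K − t) + 1. -/
open Matrix Finset Module Polynomial

set_option maxHeartbeats 1600000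
set_option synthInstance.maxHeartbeats 400000

def KerProp {𝓕 𝓚 : Type} [Fintype 𝓕] (F : Type) [Field F]
    (X : 𝓚 → Finset 𝓕) (ε : ℕ) {l : ℕ} (H : Matrix (Fin l) 𝓕 F) : Prop :=
  ∀ k : 𝓚, ∀ v : 𝓕 → F, H.mulVec v = 0 →
    {f | v f ≠ 0 ∧ f ∈ X k}.ncard ≤ 2 * ε → ∀ f ∈ X k, v f = 0


lemma validEncoder_kerProp {𝓕 𝓚 : Type} [Fintype 𝓕] {F : Type} [Field F] [Fintype F]
    {X : 𝓚 → Finset 𝓕} {ε : ℕ} {l : ℕ} {H : Matrix (Fin l) 𝓕 F}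
    (hV : ValidEncoder F X ε H) : KerProp F X ε H := by
  classical
  intro k v hv hw f hf
  obtain ⟨D, hD⟩ := hV k
  set S : Finset 𝓕 := univ.filter (fun f => v f ≠ 0 ∧ f ∈ X k) with hS
  have hScard : S.card ≤ 2 * ε := by
    have : (↑S : Set 𝓕) = {f | v f ≠ 0 ∧ f ∈ X k} := by
      ext x; simp [hS]
    rw [← Set.ncard_coe_finset, this]; exact hw
  obtain ⟨S₁, hS₁sub, hS₁card⟩ := S.exists_subset_card_eq (min_le_right ε S.card)
  set e : 𝓕 → F := fun f => if f ∈ S₁ then v f else 0 with he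
  set e' : 𝓕 → F := fun f => if f ∈ S \ S₁ then -(v f) else 0 with he'
  have h1 : {f | e f ≠ 0}.ncard ≤ ε := by
    have hsub : {f | e f ≠ 0} ⊆ (↑S₁ : Set 𝓕) := by
      intro x hx; by_contra hxx
      exact hx (by simp only [he]; rw [if_neg (by exact_mod_cast hxx)])
    calc {f | e f ≠ 0}.ncard ≤ (↑S₁ : Set 𝓕).ncard :=
          Set.ncard_le_ncard hsub (Set.toFinite _)
      _ = S₁.card := Set.ncard_coe_finset _
      _ ≤ ε := by rw [hS₁card]; exact min_le_left _ _
  have h2 : {f | e' f ≠ 0}.ncard ≤ ε := by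
    have hsub : {f | e' f ≠ 0} ⊆ (↑(S \ S₁) : Set 𝓕) := by
      intro x hx; by_contra hxx
      exact hx (by simp only [he']; rw [if_neg (by exact_mod_cast hxx)])
    calc {f | e' f ≠ 0}.ncard ≤ (↑(S \ S₁) : Set 𝓕).ncard :=
          Set.ncard_le_ncard hsub (Set.toFinite _)
      _ = (S \ S₁).card := Set.ncard_coe_finset _
      _ ≤ ε := by rw [card_sdiff_of_subset hS₁sub, hS₁card]; omega
  have hkey : ∀ g ∈ X k, e g - e' g = v g := by
    intro g hg
    by_cases hvg : v g = 0
    · have hgS : g ∉ S := by simp [hS, hvg]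
      have : g ∉ S₁ := fun h => hgS (hS₁sub h)
      simp [he, he', this, hgS, hvg]
    · have hgS : g ∈ S := by simp [hS, hvg, hg]
      by_cases hg1 : g ∈ S₁
      · simp [he, he', hg1]
      · simp [he, he', hg1, hgS]
  set w : 𝓕 → F := 0 with hwdef
  set w' : 𝓕 → F := e - e' - v with hw'def
  have hmv : H.mulVec (w + e) = H.mulVec (w' + e') := by
    have : w' + e' = e - v := by
      funext g
      simp only [hw'def, Pi.add_apply, Pi.sub_apply]
      ring
    rw [this]
    have : H.mulVec (e - v) = H.mulVec e - H.mulVec v := Matrix.mulVec_sub H e v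
    rw [this, hv, sub_zero]
    simp [hwdef]
  have hside : (fun g : {f // f ∈ X k} => w g.1) = fun g => w' g.1 := by
    funext g
    have := hkey g.1 g.2
    simp only [hw'def, hwdef, Pi.sub_apply, Pi.zero_apply]
    rw [this]; ring
  have h3 := hD w e h1
  have h4 := hD w' e' h2
  rw [hmv, hside, h4] at h3
  have := congrFun h3 ⟨f, hf⟩
  simp only [Pi.add_apply, hw'def, hwdef, Pi.sub_apply, Pi.zero_apply] at this
  have : v f = 0 := by linear_combination -this
  exact this

lemma kerProp_validEncoder {𝓕 𝓚 : Type} [Fintype 𝓕] {F : Type} [Field F] [Fintype F]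
    {X : 𝓚 → Finset 𝓕} {ε : ℕ} {l : ℕ} {H : Matrix (Fin l) 𝓕 F}
    (hK : KerProp F X ε H) : ValidEncoder F X ε H := by
  classical
  intro k
  refine ⟨fun y s => if h : ∃ z : 𝓕 → F, H.mulVec z = y ∧ ∃ e' : 𝓕 → F,
      {f | e' f ≠ 0}.ncard ≤ ε ∧ ∀ f : {f // f ∈ X k}, z f.1 - e' f.1 = s f
      then fun f => h.choose f.1 else fun _ => 0, ?_⟩
  intro w e he
  have hex : ∃ z : 𝓕 → F, H.mulVec z = H.mulVec (w + e) ∧ ∃ e' : 𝓕 → F,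
      {f | e' f ≠ 0}.ncard ≤ ε ∧ ∀ f : {f // f ∈ X k}, z f.1 - e' f.1 = w f.1 :=
    ⟨w + e, rfl, e, he, fun f => by simp⟩
  beta_reduce
  rw [dif_pos hex]
  funext f
  obtain ⟨hz1, e', he', hz2⟩ := hex.choose_spec
  set z := hex.choose with hzdef
  have hker : H.mulVec (z - (w + e)) = 0 := by
    rw [Matrix.mulVec_sub, hz1, sub_self]
  have hsupp : {g | (z - (w + e)) g ≠ 0 ∧ g ∈ X k}.ncard ≤ 2 * ε := by
    have hsub : {g | (z - (w + e)) g ≠ 0 ∧ g ∈ X k} ⊆ {g | e' g ≠ 0} ∪ {g | e g ≠ 0} := by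
      rintro g ⟨hg1, hg2⟩
      by_contra hgg
      simp only [Set.mem_union, Set.mem_setOf_eq, not_or, not_not] at hgg
      obtain ⟨hh1, hh2⟩ := hgg
      have := hz2 ⟨g, hg2⟩
      simp only at this
      apply hg1
      simp only [Pi.sub_apply, Pi.add_apply]
      rw [hh1, sub_zero] at this
      rw [this, hh2]; ring
    calc _ ≤ ({g | e' g ≠ 0} ∪ {g | e g ≠ 0}).ncard :=
          Set.ncard_le_ncard hsub (Set.toFinite _)
      _ ≤ {g | e' g ≠ 0}.ncard + {g | e g ≠ 0}.ncard := Set.ncard_union_le _ _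
      _ ≤ 2 * ε := by omega
  have := hK k _ hker hsupp f.1 f.2
  simp only [Pi.sub_apply, Pi.add_apply] at this
  have : z f.1 = w f.1 + e f.1 := by linear_combination this
  simpa using this

abbrev MNF (K t : ℕ) : Type := {s : Finset (Fin K) // s.card = t}


lemma MN_lowerBound (K t ε : ℕ) (ht2 : 2 ≤ t) (htK : t ≤ K - 1) (hε : 1 ≤ ε)
    (het : 2 * ε ≤ t) {F : Type} [Field F] {l : ℕ}
    {H : Matrix (Fin l) (MNF K t) F}
    (hKer : KerProp F
      (fun k : Fin K => univ.filter (fun f : MNF K t => k ∈ f.1))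
      ε H) :
    2 * ε * (K - t) + 1 ≤ l := by
  classical
  have hK3 : 3 ≤ K := by omega
  set X : Fin K → Finset (MNF K t) := fun k => univ.filter (fun f : MNF K t => k ∈ f.1) with hX
  set N := LinearMap.ker H.mulVecLin with hN
  set M : ℕ → Submodule F (MNF K t → F) := fun m =>
    N ⊓ ⨅ (f : {f : MNF K t // ∃ j : Fin K, K - m ≤ (j : ℕ) ∧ j ∈ f.1.1}),
      LinearMap.ker (LinearMap.proj (R := F) (φ := fun _ : MNF K t => F) f.1) with hM
  have hmem : ∀ m (v : MNF K t → F), v ∈ M m ↔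
      (H.mulVec v = 0 ∧ ∀ f : MNF K t, (∃ j : Fin K, K - m ≤ (j : ℕ) ∧ j ∈ f.1) → v f = 0) := by
    intro m v
    simp only [hM, Submodule.mem_inf, LinearMap.mem_ker, hN, Matrix.mulVecLin_apply,
      Submodule.mem_iInf, Subtype.forall, LinearMap.proj_apply]
    exact Iff.rfl
  -- step
  have hstep : ∀ m, m < K - t →
      finrank F (M m) + 2 * ε ≤ finrank F (M (m + 1)) + Nat.choose (K - 1 - m) (t - 1) := by
    intro m hm
    set k : Fin K := ⟨K - 1 - m, by omega⟩ with hk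
    set Ck : Finset (MNF K t) := univ.filter (fun f : MNF K t => k ∈ f.1 ∧ ∀ j ∈ f.1, (j : ℕ) ≤ K - 1 - m)
      with hCk
    have hCkcard : Ck.card ≤ Nat.choose (K - 1 - m) (t - 1) := by
      have h1 : Ck.card ≤ ((Finset.Iio k).powersetCard (t - 1)).card := by
        apply Finset.card_le_card_of_injOn (fun f : MNF K t => f.1.erase k)
        · intro f hf
          simp only [hCk, Finset.mem_coe, mem_filter, mem_univ, true_and] at hf
          rw [Finset.mem_coe, Finset.mem_powersetCard]
          constructor
          · intro x hx
            rw [Finset.mem_erase] at hx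
            rw [Finset.mem_Iio]
            have hle := hf.2 x hx.2
            have hne : (x : ℕ) ≠ K - 1 - m := fun hc => hx.1 (Fin.ext (by rw [hc, hk]))
            rw [Fin.lt_def, hk]
            simp only []
            omega
          · rw [Finset.card_erase_of_mem hf.1, f.2]
        · intro f hf g hg hfg
          simp only [hCk, Finset.coe_filter, Set.mem_setOf_eq] at hf hg
          apply Subtype.ext
          have h1 : f.1 = insert k (f.1.erase k) := (Finset.insert_erase hf.2.1).symm
          have h2 : g.1 = insert k (g.1.erase k) := (Finset.insert_erase hg.2.1).symm
          have hfg' : f.1.erase k = g.1.erase k := hfg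
          rw [h1, h2, hfg']
      calc Ck.card ≤ ((Finset.Iio k).powersetCard (t - 1)).card := h1
        _ = Nat.choose (K - 1 - m) (t - 1) := by
            rw [Finset.card_powersetCard, Fin.card_Iio]
    have hchoose_ge : 2 * ε ≤ Nat.choose (K - 1 - m) (t - 1) := by
      have h1 : Nat.choose t (t - 1) = t := by
        have h2 : t - (t - 1) = 1 := by omega
        rw [← Nat.choose_symm (by omega : t - 1 ≤ t), h2, Nat.choose_one_right]
      calc 2 * ε ≤ t := het
        _ = Nat.choose t (t - 1) := h1.symm
        _ ≤ Nat.choose (K - 1 - m) (t - 1) := Nat.choose_le_choose _ (by omega)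
    obtain ⟨T, hTsub, hTcard⟩ := Ck.exists_subset_card_eq (Nat.sub_le Ck.card (2 * ε))
    set π : M m →ₗ[F] ({x // x ∈ T} → F) :=
      { toFun := fun v x => v.1 x.1
        map_add' := fun a b => rfl
        map_smul' := fun c a => rfl } with hπ
    have hrn := LinearMap.finrank_range_add_finrank_ker π
    have hrange : finrank F (LinearMap.range π) ≤ Ck.card - 2 * ε := by
      calc finrank F (LinearMap.range π) ≤ finrank F ({x // x ∈ T} → F) :=
            Submodule.finrank_le _
        _ = T.card := by rw [Module.finrank_fintype_fun_eq_card, Fintype.card_coe]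
        _ = Ck.card - 2 * ε := hTcard
    have hkerle : finrank F (LinearMap.ker π) ≤ finrank F (M (m + 1)) := by
      set ι : LinearMap.ker π →ₗ[F] (MNF K t → F) := (M m).subtype.comp (LinearMap.ker π).subtype
        with hι
      have hinj : Function.Injective ι := by
        intro a b hab
        apply Subtype.ext; apply Subtype.ext
        exact hab
      have hle : LinearMap.range ι ≤ M (m + 1) := by
        rintro _ ⟨⟨⟨v, hvMm⟩, hvker⟩, rfl⟩
        have hvker' : ∀ x ∈ T, v x = 0 := by
          intro x hx
          have := congrFun (LinearMap.mem_ker.mp hvker) ⟨x, hx⟩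
          exact this
        obtain ⟨hv1, hv2⟩ := (hmem m v).mp hvMm
        have hXk : ∀ f ∈ X k, v f = 0 := by
          apply hKer k v hv1
          have hsub : {f : MNF K t | v f ≠ 0 ∧ f ∈ X k} ⊆ ↑(Ck \ T) := by
            rintro f ⟨hf1, hf2⟩
            rw [hX, mem_filter] at hf2
            rw [Finset.coe_sdiff, Set.mem_diff]
            constructor
            · simp only [hCk, Finset.coe_filter, Set.mem_setOf_eq]
              refine ⟨mem_univ _, hf2.2, ?_⟩
              intro j hj
              by_contra hc
              exact hf1 (hv2 f ⟨j, by omega, hj⟩)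
            · intro hfT
              exact hf1 (hvker' f hfT)
          calc {f : MNF K t | v f ≠ 0 ∧ f ∈ X k}.ncard ≤ (↑(Ck \ T) : Set (MNF K t)).ncard :=
                Set.ncard_le_ncard hsub (Set.toFinite _)
            _ = (Ck \ T).card := Set.ncard_coe_finset _
            _ ≤ 2 * ε := by rw [Finset.card_sdiff_of_subset hTsub, hTcard]; omega
        rw [hmem]
        refine ⟨hv1, ?_⟩
        rintro f ⟨j, hj1, hj2⟩
        by_cases hc : K - m ≤ (j : ℕ)
        · exact hv2 f ⟨j, hc, hj2⟩
        · have : j = k := Fin.ext (by rw [hk]; simp only []; omega)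
          apply hXk
          rw [hX, mem_filter]
          exact ⟨mem_univ _, this ▸ hj2⟩
      calc finrank F (LinearMap.ker π) = finrank F (LinearMap.range ι) :=
            (LinearMap.finrank_range_of_inj hinj).symm
        _ ≤ finrank F (M (m + 1)) := Submodule.finrank_mono hle
    omega
  -- base
  have hbase : M (K - t) = ⊥ := by
    rw [Submodule.eq_bot_iff]
    intro v hv
    rw [hmem] at hv
    obtain ⟨hv1, hv2⟩ := hv
    have hKt : K - (K - t) = t := by omega
    set f0 : MNF K t := ⟨Finset.Iio (⟨t, by omega⟩ : Fin K), by rw [Fin.card_Iio]⟩ with hf0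
    have hmemf0 : ∀ j : Fin K, j ∈ f0.1 ↔ (j : ℕ) < t := by
      intro j
      rw [hf0]
      simp only [Finset.mem_Iio, Fin.lt_def]
    have honly : ∀ g : MNF K t, (∀ j ∈ g.1, (j : ℕ) < t) → g = f0 := by
      intro g hg
      apply Subtype.ext
      apply Finset.eq_of_subset_of_card_le
      · intro x hx
        rw [hmemf0]
        exact hg x hx
      · rw [g.2, f0.2]
    set k0 : Fin K := ⟨0, by omega⟩ with hk0
    have hvf0 : v f0 = 0 := by
      apply hKer k0 v hv1
      · have hsub : {g : MNF K t | v g ≠ 0 ∧ g ∈ X k0} ⊆ {f0} := by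
          rintro g ⟨hg1, _⟩
          by_cases hc : ∃ j ∈ g.1, t ≤ (j : ℕ)
          · obtain ⟨j, hj1, hj2⟩ := hc
            exact absurd (hv2 g ⟨j, by omega, hj1⟩) hg1
          · push_neg at hc
            exact honly g (fun j hj => hc j hj)
        calc {g : MNF K t | v g ≠ 0 ∧ g ∈ X k0}.ncard ≤ ({f0} : Set (MNF K t)).ncard :=
              Set.ncard_le_ncard hsub (Set.toFinite _)
          _ = 1 := Set.ncard_singleton _
          _ ≤ 2 * ε := by omega
      · rw [hX, mem_filter]
        refine ⟨mem_univ _, ?_⟩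
        rw [hmemf0]
        simp only [hk0]
        omega
    funext f
    by_cases hc : ∃ j ∈ f.1, t ≤ (j : ℕ)
    · obtain ⟨j, hj1, hj2⟩ := hc
      exact hv2 f ⟨j, by omega, hj1⟩
    · push_neg at hc
      rw [honly f (fun j hj => hc j hj)]
      exact hvf0
  -- chain
  have hchain : ∀ m, m ≤ K - t →
      finrank F (M 0) + 2 * ε * m ≤
        finrank F (M m) + ∑ i ∈ Finset.range m, Nat.choose (K - 1 - i) (t - 1) := by
    intro m
    induction m with
    | zero => simp
    | succ m ih =>
      intro hm
      have h1 := ih (by omega)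
      have h2 := hstep m (by omega)
      rw [Finset.sum_range_succ, Nat.mul_succ]
      omega
  have h1 := hchain (K - t) le_rfl
  rw [hbase, finrank_bot] at h1
  -- sum identity
  have hsum : ∑ i ∈ Finset.range (K - t), Nat.choose (K - 1 - i) (t - 1) =
      ∑ j ∈ Finset.range (K - t), Nat.choose (t + j) (t - 1) := by
    rw [← Finset.sum_range_reflect]
    apply Finset.sum_congr rfl
    intro i hi
    rw [Finset.mem_range] at hi
    congr 1
    omega
  have hock : ∀ r, 1 + ∑ j ∈ Finset.range r, Nat.choose (t + j) (t - 1) =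
      Nat.choose (t + r) t := by
    intro r
    induction r with
    | zero => simp
    | succ r ih =>
      have hp : Nat.choose (t + r + 1) t = Nat.choose (t + r) (t - 1) + Nat.choose (t + r) t := by
        have ht1 : t = (t - 1) + 1 := by omega
        calc Nat.choose (t + r + 1) t = Nat.choose ((t + r) + 1) ((t - 1) + 1) := by rw [← ht1]
          _ = Nat.choose (t + r) (t - 1) + Nat.choose (t + r) ((t - 1) + 1) :=
              Nat.choose_succ_succ _ _
          _ = Nat.choose (t + r) (t - 1) + Nat.choose (t + r) t := by rw [← ht1]
      rw [Finset.sum_range_succ, ← Nat.add_assoc, show t + (r + 1) = t + r + 1 from rfl, hp]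
      omega
  have hockK := hock (K - t)
  rw [show t + (K - t) = K by omega] at hockK
  -- global rank-nullity
  have hrk := LinearMap.finrank_range_add_finrank_ker (H.mulVecLin)
  have hcard : finrank F (MNF K t → F) = Nat.choose K t := by
    rw [Module.finrank_fintype_fun_eq_card]
    have : Fintype.card (MNF K t) = Nat.choose K t := by
      rw [show Fintype.card (MNF K t) = Nat.choose (Fintype.card (Fin K)) t from
        Fintype.card_finset_len t, Fintype.card_fin]
    exact this
  have hrangel : finrank F (LinearMap.range H.mulVecLin) ≤ l := by
    calc finrank F (LinearMap.range H.mulVecLin) ≤ finrank F (Fin l → F) :=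
          Submodule.finrank_le _
      _ = l := by rw [Module.finrank_fintype_fun_eq_card, Fintype.card_fin]
  have hM0 : M 0 = N := by
    apply le_antisymm inf_le_left
    refine le_inf le_rfl (le_iInf ?_)
    rintro ⟨f, j, hj1, hj2⟩
    exact absurd j.isLt (by omega)
  rw [hM0] at h1
  rw [hcard] at hrk
  rw [hsum] at h1
  have hNN : finrank F ↥N = finrank F ↥(LinearMap.ker H.mulVecLin) := rfl
  omega




-- C0 : binary sums are injective
lemma sum_two_pow_lt {S : Finset ℕ} {n : ℕ} (h : ∀ j ∈ S, j < n) :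
    ∑ j ∈ S, 2 ^ j < 2 ^ n := by
  induction n generalizing S with
  | zero =>
    have : S = ∅ := by
      apply Finset.eq_empty_of_forall_notMem
      intro x hx; exact absurd (h x hx) (by omega)
    simp [this]
  | succ n ih =>
    by_cases hn : n ∈ S
    · have h2 : ∀ j ∈ S.erase n, j < n := by
        intro j hj
        rw [Finset.mem_erase] at hj
        have := h j hj.2
        omega
      have h3 := ih h2
      have h4 : ∑ j ∈ S.erase n, 2 ^ j + 2 ^ n = ∑ j ∈ S, 2 ^ j :=
        Finset.sum_erase_add S _ hn
      have : (2:ℕ) ^ (n+1) = 2^n + 2^n := by ring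
      omega
    · have h2 : ∀ j ∈ S, j < n := by
        intro j hj
        have := h j hj
        rcases Nat.lt_succ_iff_lt_or_eq.mp this with h' | h'
        · exact h'
        · exact absurd (h' ▸ hj) hn
      have := ih h2
      have : (2:ℕ)^n ≤ 2^(n+1) := Nat.pow_le_pow_right (by norm_num) (by omega)
      omega

lemma sum_two_pow_injective : Function.Injective (fun S : Finset ℕ => ∑ j ∈ S, 2 ^ j) := by
  intro S S' h
  simp only at h
  induction S using Finset.strongInduction generalizing S' with
  | _ S ih =>
    rcases Finset.eq_empty_or_nonempty S with hS | hS
    · subst hS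
      simp only [Finset.sum_empty] at h
      by_contra hne
      obtain ⟨x, hx⟩ := Finset.nonempty_iff_ne_empty.mpr (fun hc => hne hc.symm)
      have h1 : 2 ^ x ≤ ∑ j ∈ S', 2 ^ j := Finset.single_le_sum (fun i _ => Nat.zero_le _) hx
      have : (0:ℕ) < 2 ^ x := Nat.pow_pos (by norm_num)
      omega
    · have hS' : S'.Nonempty := by
        by_contra hc
        rw [Finset.not_nonempty_iff_eq_empty] at hc
        subst hc
        simp only [Finset.sum_empty] at h
        obtain ⟨x, hx⟩ := hS
        have h1 : 2 ^ x ≤ ∑ j ∈ S, 2 ^ j := Finset.single_le_sum (fun i _ => Nat.zero_le _) hx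
        have : (0:ℕ) < 2 ^ x := Nat.pow_pos (by norm_num)
        omega
      set m := S.max' hS with hm
      set m' := S'.max' hS' with hm'
      have hmm : m = m' := by
        by_contra hne
        rcases Nat.lt_or_ge m m' with hlt | hge
        · have h1 : ∑ j ∈ S, 2 ^ j < 2 ^ m' :=
            sum_two_pow_lt (fun j hj => lt_of_le_of_lt (S.le_max' j hj) hlt)
          have h2 : 2 ^ m' ≤ ∑ j ∈ S', 2 ^ j :=
            Finset.single_le_sum (fun i _ => Nat.zero_le _) (S'.max'_mem hS')
          omega
        · have hlt : m' < m := by omega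
          have h1 : ∑ j ∈ S', 2 ^ j < 2 ^ m :=
            sum_two_pow_lt (fun j hj => lt_of_le_of_lt (S'.le_max' j hj) hlt)
          have h2 : 2 ^ m ≤ ∑ j ∈ S, 2 ^ j :=
            Finset.single_le_sum (fun i _ => Nat.zero_le _) (S.max'_mem hS)
          omega
      have herase : ∑ j ∈ S.erase m, 2 ^ j = ∑ j ∈ S'.erase m', 2 ^ j := by
        have h1 := Finset.sum_erase_add S (fun j => 2^j) (S.max'_mem hS)
        have h2 := Finset.sum_erase_add S' (fun j => 2^j) (S'.max'_mem hS')
        have h3 : (2:ℕ)^m = 2^m' := by rw [hmm]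
        simp only [← hm] at h1
        simp only [← hm'] at h2
        omega
      have hsub : S.erase m ⊂ S := Finset.erase_ssubset (S.max'_mem hS)
      have := ih (S.erase m) hsub herase
      rw [← Finset.insert_erase (S.max'_mem hS), ← Finset.insert_erase (S'.max'_mem hS'),
        ← hm, ← hm', this, hmm]

-- C1 : monic binomials over ZMod 2
abbrev R2 : Type := Polynomial (ZMod 2)

lemma binom_monic {a b : ℕ} (hab : a ≠ b) :
    ((X : R2) ^ a - X ^ b).Monic ∧ ((X : R2) ^ a - X ^ b).natDegree = max a b := by
  have hchar : ∀ p q : R2, p - q = p + q := by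
    intro p q
    haveI : CharP R2 2 := by infer_instance
    rw [CharTwo.sub_eq_add]
  rw [hchar]
  rcases Nat.lt_or_ge b a with h | h
  · have hdeg : ((X : R2) ^ b).degree < ((X : R2) ^ a).degree := by
      rw [degree_X_pow, degree_X_pow]
      exact_mod_cast h
    constructor
    · exact (monic_X_pow a).add_of_left hdeg
    · rw [natDegree_add_eq_left_of_degree_lt hdeg, natDegree_X_pow]
      omega
  · have hba : a < b := by omega
    have hdeg : ((X : R2) ^ a).degree < ((X : R2) ^ b).degree := by
      rw [degree_X_pow, degree_X_pow]
      exact_mod_cast hba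
    constructor
    · rw [add_comm]
      exact (monic_X_pow b).add_of_left hdeg
    · rw [add_comm, natDegree_add_eq_left_of_degree_lt hdeg, natDegree_X_pow]
      omega

-- C2 : unique maximum assignment
lemma unique_max_assignment {d : ℕ} (c μ : Fin d → ℕ)
    (hc : Function.Injective c) (hμ : Function.Injective μ) :
    ∃ σ0 : Equiv.Perm (Fin d), ∀ σ : Equiv.Perm (Fin d), σ ≠ σ0 →
      ∑ i, c (σ i) * μ i < ∑ i, c (σ0 i) * μ i := by
  classical
  set G : Equiv.Perm (Fin d) → ℕ := fun σ => ∑ i, c (σ i) * μ i with hG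
  obtain ⟨σ0, -, hσ0⟩ := Finset.exists_max_image (univ : Finset (Equiv.Perm (Fin d))) G
    ⟨1, mem_univ 1⟩
  have hσ0max : ∀ σ, G σ ≤ G σ0 := fun σ => hσ0 σ (mem_univ σ)
  -- every maximizer is "monotone"
  have hmono : ∀ σ : Equiv.Perm (Fin d), (∀ τ, G τ ≤ G σ) →
      ∀ i1 i2, μ i1 < μ i2 → c (σ i1) < c (σ i2) := by
    intro σ hmax i1 i2 hμlt
    have hne : i1 ≠ i2 := fun hc' => absurd (hc' ▸ hμlt) (lt_irrefl _)
    by_contra hcle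
    push_neg at hcle
    have hclt : c (σ i2) < c (σ i1) := by
      rcases Nat.lt_or_ge (c (σ i2)) (c (σ i1)) with h | h
      · exact h
      · have : c (σ i1) = c (σ i2) := by omega
        exact absurd (σ.injective (hc this)) hne
    set σ' : Equiv.Perm (Fin d) := (Equiv.swap i1 i2).trans σ with hσ'
    have hσ'1 : σ' i1 = σ i2 := by simp [hσ', Equiv.swap_apply_left]
    have hσ'2 : σ' i2 = σ i1 := by simp [hσ', Equiv.swap_apply_right]
    have hσ'o : ∀ i, i ≠ i1 → i ≠ i2 → σ' i = σ i := by
      intro i h1 h2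
      simp [hσ', Equiv.swap_apply_of_ne_of_ne h1 h2]
    -- sum computation
    have hGσ' : G σ' + (c (σ i1) * μ i1 + c (σ i2) * μ i2) =
        G σ + (c (σ i2) * μ i1 + c (σ i1) * μ i2) := by
      have key : ∀ τ : Equiv.Perm (Fin d), G τ =
          c (τ i1) * μ i1 + (c (τ i2) * μ i2 +
            ∑ i ∈ (univ.erase i1).erase i2, c (τ i) * μ i) := by
        intro τ
        simp only [hG]
        rw [← Finset.add_sum_erase _ _ (mem_univ i1)]
        congr 1
        rw [← Finset.add_sum_erase _ _ (Finset.mem_erase.mpr ⟨(Ne.symm hne), mem_univ i2⟩)]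
      rw [key σ', key σ, hσ'1, hσ'2]
      have : ∑ i ∈ (univ.erase i1).erase i2, c (σ' i) * μ i =
          ∑ i ∈ (univ.erase i1).erase i2, c (σ i) * μ i := by
        apply Finset.sum_congr rfl
        intro i hi
        rw [Finset.mem_erase, Finset.mem_erase] at hi
        rw [hσ'o i hi.2.1 hi.1]
      rw [this]
      ring
    have hgain : c (σ i2) * μ i1 + c (σ i1) * μ i2 >
        c (σ i1) * μ i1 + c (σ i2) * μ i2 := by
      have h1 : c (σ i2) + 1 ≤ c (σ i1) := hclt
      have h2 : μ i1 + 1 ≤ μ i2 := hμlt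
      nlinarith
    have := hmax σ'
    omega
  -- maximizers are unique
  have huniq : ∀ σ : Equiv.Perm (Fin d), (∀ τ, G τ ≤ G σ) → σ = σ0 := by
    intro σ hmax
    apply Equiv.ext
    intro i
    -- card characterization
    have hcard : ∀ (ρ : Equiv.Perm (Fin d)), (∀ τ, G τ ≤ G ρ) →
        (univ.filter (fun y => c y < c (ρ i))).card =
          (univ.filter (fun j => μ j < μ i)).card := by
      intro ρ hρ
      have hset : univ.filter (fun j => c (ρ j) < c (ρ i)) =
          univ.filter (fun j => μ j < μ i) := by
        ext j
        simp only [Finset.mem_filter, Finset.mem_univ, true_and]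
        constructor
        · intro hj
          have hji : j ≠ i := fun hji => absurd (hji ▸ hj) (lt_irrefl _)
          rcases Nat.lt_or_ge (μ j) (μ i) with h | h
          · exact h
          · have : μ j ≠ μ i := fun hc' => hji (hμ hc')
            have hμlt : μ i < μ j := by omega
            exact absurd (hmono ρ hρ i j hμlt) (by omega)
        · intro hj
          exact hmono ρ hρ j i hj
      rw [← hset]
      apply Finset.card_bij (fun y _ => ρ.symm y)
      · intro y hy
        simp only [Finset.mem_filter, Finset.mem_univ, true_and] at hy ⊢
        simpa using hy
      · intro y1 _ y2 _ hy
        exact ρ.symm.injective hy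
      · intro j hj
        simp only [Finset.mem_filter, Finset.mem_univ, true_and] at hj
        exact ⟨ρ j, by simp [Finset.mem_filter, hj], by simp⟩
    have h1 := hcard σ hmax
    have h2 := hcard σ0 hσ0max
    by_contra hne
    have hμσ : c (σ i) ≠ c (σ0 i) := fun hc' => hne (hc hc')
    rcases Nat.lt_or_ge (c (σ i)) (c (σ0 i)) with hlt | hge
    · have hss : univ.filter (fun y => c y < c (σ i)) ⊂
          univ.filter (fun y => c y < c (σ0 i)) := by
        apply Finset.ssubset_iff_of_subset (fun y hy => by
          simp only [Finset.mem_filter, Finset.mem_univ, true_and] at hy ⊢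
          omega) |>.mpr
        exact ⟨σ i, by simp [hlt], by simp⟩
      have := Finset.card_lt_card hss
      omega
    · have hlt : c (σ0 i) < c (σ i) := by omega
      have hss : univ.filter (fun y => c y < c (σ0 i)) ⊂
          univ.filter (fun y => c y < c (σ i)) := by
        apply Finset.ssubset_iff_of_subset (fun y hy => by
          simp only [Finset.mem_filter, Finset.mem_univ, true_and] at hy ⊢
          omega) |>.mpr
        exact ⟨σ0 i, by simp [hlt], by simp⟩
      have := Finset.card_lt_card hss
      omega
  refine ⟨σ0, fun σ hσne => ?_⟩
  have hle := hσ0max σ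
  rcases Nat.lt_or_ge (G σ) (G σ0) with h | h
  · exact h
  · have heq : ∀ τ, G τ ≤ G σ := fun τ => le_trans (hσ0max τ) (by omega)
    exact absurd (huniq σ heq) hσne

-- C3 : determinant nonzero via unique max assignment degree
lemma det_ne_zero_unique_max {d : ℕ} (P : Matrix (Fin d) (Fin d) R2)
    (Dg : Fin d → Fin d → ℕ)
    (hP : ∀ r c, (P r c).Monic ∧ (P r c).natDegree = Dg r c)
    (σ0 : Equiv.Perm (Fin d))
    (hmax : ∀ σ : Equiv.Perm (Fin d), σ ≠ σ0 → ∑ i, Dg (σ i) i < ∑ i, Dg (σ0 i) i) :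
    P.det ≠ 0 := by
  classical
  haveI : CharP R2 2 := by infer_instance
  set Dm := ∑ i, Dg (σ0 i) i with hDm
  have hterm : ∀ σ : Equiv.Perm (Fin d), (∏ i, P (σ i) i).Monic ∧
      (∏ i, P (σ i) i).natDegree = ∑ i, Dg (σ i) i := by
    intro σ
    constructor
    · exact monic_prod_of_monic _ _ (fun i _ => (hP (σ i) i).1)
    · rw [natDegree_prod_of_monic _ _ (fun i _ => (hP (σ i) i).1)]
      exact Finset.sum_congr rfl (fun i _ => (hP (σ i) i).2)
  have hcoeff : P.det.coeff Dm = 1 := by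
    rw [Matrix.det_apply]
    have hsmul : ∀ (u : ℤˣ) (p : R2), u • p = p := by
      intro u p
      rcases Int.units_eq_one_or u with h | h
      · rw [h, one_smul]
      · rw [h]
        have : (-1 : ℤˣ) • p = -p := by
          rw [Units.smul_def]
          norm_num
        rw [this, CharTwo.neg_eq]
    have : ∑ σ : Equiv.Perm (Fin d), Equiv.Perm.sign σ • ∏ i, P (σ i) i =
        ∑ σ : Equiv.Perm (Fin d), ∏ i, P (σ i) i :=
      Finset.sum_congr rfl (fun σ _ => hsmul _ _)
    rw [this, finset_sum_coeff]
    rw [Finset.sum_eq_single σ0]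
    · rw [← (hterm σ0).2] at hDm
      rw [hDm]
      exact (hterm σ0).1.coeff_natDegree
    · intro σ _ hσ
      apply coeff_eq_zero_of_natDegree_lt
      rw [(hterm σ).2]
      exact hmax σ hσ
    · intro h
      exact absurd (mem_univ σ0) h
  intro hdet
  rw [hdet, coeff_zero] at hcoeff
  exact one_ne_zero hcoeff.symm

lemma key_eN (L s s' ck cj : ℕ) (hk : ck < L) (hj : cj < L)
    (h : (s+1)*L + ck = (s'+1)*L + cj) : s = s' ∧ ck = cj := by
  have hss : s = s' := by
    rcases Nat.lt_trichotomy s s' with hlt | heq | hgt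
    · exfalso
      have h2 : s + 2 ≤ s' + 1 := by omega
      have h1 : (s+2) * L ≤ (s'+1) * L := Nat.mul_le_mul_right _ h2
      have h3 : (s+2) * L = (s+1)*L + L := by ring
      linarith
    · exact heq
    · exfalso
      have h2 : s' + 2 ≤ s + 1 := by omega
      have h1 : (s'+2) * L ≤ (s+1) * L := Nat.mul_le_mul_right _ h2
      have h3 : (s'+2) * L = (s'+1)*L + L := by ring
      linarith
  subst hss
  exact ⟨rfl, by omega⟩

lemma key_le1 (L a b cx cy : ℕ) (hy : cy < L) (hab : a < b) :
    (a+1)*L + cy ≤ (b+1)*L + cx := by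
  have h2 : a + 2 ≤ b + 1 := by omega
  have h1 : (a+2) * L ≤ (b+1) * L := Nat.mul_le_mul_right _ h2
  have h3 : (a+2) * L = (a+1)*L + L := by ring
  linarith

namespace MNC

variable (K t ε : ℕ)

/-- exponents -/
def eN (k : Fin K) (s : Fin (2*ε)) : ℕ := ((s:ℕ)+1) * 2^(K+1) + 2^(k:ℕ)

lemma pow_lt_Lam (k : Fin K) : 2^(k:ℕ) < 2^(K+1) :=
  Nat.pow_lt_pow_right (by norm_num) (by have := k.isLt; omega)

lemma eN_inj {k j : Fin K} {s s' : Fin (2*ε)} (h : eN K ε k s = eN K ε j s') :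
    k = j ∧ s = s' := by
  have hk := pow_lt_Lam K k
  have hj := pow_lt_Lam K j
  have h' : ((s:ℕ)+1) * 2^(K+1) + 2^(k:ℕ) = ((s':ℕ)+1) * 2^(K+1) + 2^(j:ℕ) := h
  obtain ⟨h1, h2⟩ := key_eN (2^(K+1)) (s:ℕ) (s':ℕ) (2^(k:ℕ)) (2^(j:ℕ)) hk hj h'
  exact ⟨Fin.ext (Nat.pow_right_injective (le_refl 2) h2), Fin.ext h1⟩

/-- per-(j) column sum of maxima -/
def uN (k : Fin K) (s : Fin (2*ε)) : ℕ :=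
  (s:ℕ) * eN K ε k s + ((s:ℕ)+1) * 2^(K+1) +
    (∑ sv ∈ Finset.Ico ((s:ℕ)+1) (2*ε), (sv+1)) * 2^(K+1)

lemma max_eN {k j : Fin K} (hkj : j ≠ k) (s : Fin (2*ε)) :
    ∑ s' : Fin (2*ε), max (eN K ε k s) (eN K ε j s') =
      uN K ε k s + max (2^(k:ℕ)) (2^(j:ℕ)) + (2*ε - 1 - (s:ℕ)) * 2^(j:ℕ) := by
  have hk := pow_lt_Lam K k
  have hj := pow_lt_Lam K j
  have hsd := s.isLt
  have hconv : (∑ s' : Fin (2*ε), max (eN K ε k s) (eN K ε j s')) =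
      ∑ sv ∈ Finset.range (2*ε), max (eN K ε k s) ((sv+1) * 2^(K+1) + 2^(j:ℕ)) := by
    rw [← Fin.sum_univ_eq_sum_range
      (fun sv => max (eN K ε k s) ((sv+1) * 2^(K+1) + 2^(j:ℕ))) (2*ε)]
    exact Finset.sum_congr rfl (fun s' _ => rfl)
  rw [hconv, Finset.range_eq_Ico,
    ← Finset.sum_Ico_consecutive _ (Nat.zero_le (s:ℕ)) (le_of_lt hsd)]
  have hconst : ∀ sv ∈ Finset.Ico 0 (s:ℕ),
      max (eN K ε k s) ((sv+1) * 2^(K+1) + 2^(j:ℕ)) = eN K ε k s := by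
    intro sv hsv
    rw [Finset.mem_Ico] at hsv
    apply max_eq_left
    show (sv+1) * 2^(K+1) + 2^(j:ℕ) ≤ ((s:ℕ)+1) * 2^(K+1) + 2^(k:ℕ)
    exact key_le1 _ sv (s:ℕ) _ _ hj hsv.2
  have hlow : ∑ sv ∈ Finset.Ico 0 (s:ℕ),
      max (eN K ε k s) ((sv+1) * 2^(K+1) + 2^(j:ℕ)) = (s:ℕ) * eN K ε k s := by
    rw [Finset.sum_congr rfl hconst, Finset.sum_const, Nat.card_Ico, Nat.sub_zero,
      smul_eq_mul]
  rw [Finset.sum_eq_sum_Ico_succ_bot hsd, hlow]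
  have hmid : max (eN K ε k s) (((s:ℕ)+1) * 2^(K+1) + 2^(j:ℕ)) =
      ((s:ℕ)+1) * 2^(K+1) + max (2^(k:ℕ)) (2^(j:ℕ)) := by
    show max (((s:ℕ)+1) * 2^(K+1) + 2^(k:ℕ)) (((s:ℕ)+1) * 2^(K+1) + 2^(j:ℕ)) = _
    rw [max_add_add_left]
  have hptw : ∀ sv ∈ Finset.Ico ((s:ℕ)+1) (2*ε),
      max (eN K ε k s) ((sv+1) * 2^(K+1) + 2^(j:ℕ)) = (sv+1) * 2^(K+1) + 2^(j:ℕ) := by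
    intro sv hsv
    rw [Finset.mem_Ico] at hsv
    apply max_eq_right
    show ((s:ℕ)+1) * 2^(K+1) + 2^(k:ℕ) ≤ (sv+1) * 2^(K+1) + 2^(j:ℕ)
    exact key_le1 _ (s:ℕ) sv _ _ hk (by omega)
  have hhigh : ∑ sv ∈ Finset.Ico ((s:ℕ)+1) (2*ε),
      max (eN K ε k s) ((sv+1)*2^(K+1) + 2^(j:ℕ)) =
      (∑ sv ∈ Finset.Ico ((s:ℕ)+1) (2*ε), (sv+1)) * 2^(K+1) +
        (2*ε - 1 - (s:ℕ)) * 2^(j:ℕ) := by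
    rw [Finset.sum_congr rfl hptw, Finset.sum_add_distrib, Finset.sum_const,
      Nat.card_Ico, smul_eq_mul, ← Finset.sum_mul]
    congr 2
    omega
  rw [hmid, hhigh]
  unfold uN
  ring

/-- column polynomial -/
noncomputable def Ppoly (k : Fin K) (f : MNF K t) (s : Fin (2*ε)) : R2 :=
  ∏ j ∈ univ \ f.1, ∏ s' : Fin (2*ε), ((X : R2) ^ (eN K ε k s) - X ^ (eN K ε j s'))

def μF (f : MNF K t) : ℕ := ∑ j ∈ univ \ f.1, 2^(j:ℕ)

def τF (k : Fin K) (f : MNF K t) : ℕ := ∑ j ∈ univ \ f.1, max (2^(k:ℕ)) (2^(j:ℕ))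

lemma μF_inj : Function.Injective (μF K t) := by
  intro f g h
  unfold μF at h
  have himg : ∀ A : Finset (Fin K), ∑ j ∈ A, 2^(j:ℕ) = ∑ n ∈ A.image Fin.val, 2^n := by
    intro A
    rw [Finset.sum_image (fun x _ y _ hxy => Fin.val_injective hxy)]
  rw [himg, himg] at h
  have h2 := sum_two_pow_injective h
  have h3 : univ \ f.1 = univ \ g.1 :=
    Finset.image_injective Fin.val_injective h2
  have h4 : f.1 = g.1 := by
    have := congrArg (fun A => univ \ A) h3
    simpa using this
  exact Subtype.ext h4

lemma Ppoly_monic {k : Fin K} {f : MNF K t} (hk : k ∈ f.1) (s : Fin (2*ε)) :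
    (Ppoly K t ε k f s).Monic ∧
      (Ppoly K t ε k f s).natDegree =
        (K - t) * uN K ε k s + τF K t k f + (2*ε - 1 - (s:ℕ)) * μF K t f := by
  have hne : ∀ j ∈ univ \ f.1, ∀ s' : Fin (2*ε), eN K ε k s ≠ eN K ε j s' := by
    intro j hj s' hcon
    rw [Finset.mem_sdiff] at hj
    exact hj.2 ((eN_inj K ε hcon).1 ▸ hk)
  have hmon : ∀ j ∈ univ \ f.1, (∏ s' : Fin (2*ε),
      ((X : R2) ^ (eN K ε k s) - X ^ (eN K ε j s'))).Monic :=
    fun j hj => monic_prod_of_monic _ _ (fun s' _ => (binom_monic (hne j hj s')).1)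
  constructor
  · exact monic_prod_of_monic _ _ hmon
  · unfold Ppoly
    rw [natDegree_prod_of_monic _ _ hmon]
    have hin : ∀ j ∈ univ \ f.1, (∏ s' : Fin (2*ε),
        ((X : R2) ^ (eN K ε k s) - X ^ (eN K ε j s'))).natDegree =
        uN K ε k s + max (2^(k:ℕ)) (2^(j:ℕ)) + (2*ε - 1 - (s:ℕ)) * 2^(j:ℕ) := by
      intro j hj
      rw [natDegree_prod_of_monic _ _ (fun s' _ => (binom_monic (hne j hj s')).1)]
      have : ∀ s' : Fin (2*ε), ((X : R2) ^ (eN K ε k s) - X ^ (eN K ε j s')).natDegree =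
          max (eN K ε k s) (eN K ε j s') := fun s' => (binom_monic (hne j hj s')).2
      rw [Finset.sum_congr rfl (fun s' _ => this s')]
      have hjk : j ≠ k := by
        rw [Finset.mem_sdiff] at hj
        exact fun hc => hj.2 (hc ▸ hk)
      exact max_eN K ε hjk s
    rw [Finset.sum_congr rfl hin]
    have hcompl : (univ \ f.1).card = K - t := by
      rw [Finset.card_sdiff_of_subset (Finset.subset_univ _), Finset.card_univ, Fintype.card_fin, f.2]
    rw [Finset.sum_add_distrib, Finset.sum_add_distrib, Finset.sum_const, hcompl,
      smul_eq_mul, ← Finset.mul_sum]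
    rfl

/-- enumeration of a `2ε`-subset -/
noncomputable def enum (Tf : Finset (MNF K t)) (hT : Tf.card = 2*ε) (i : Fin (2*ε)) : MNF K t :=
  (Tf.equivFin.symm (Fin.cast hT.symm i)).1

lemma enum_mem (Tf : Finset (MNF K t)) (hT : Tf.card = 2*ε) (i : Fin (2*ε)) :
    enum K t ε Tf hT i ∈ Tf := (Tf.equivFin.symm (Fin.cast hT.symm i)).2

lemma enum_inj (Tf : Finset (MNF K t)) (hT : Tf.card = 2*ε) :
    Function.Injective (enum K t ε Tf hT) := by
  intro i j h
  have h1 := Subtype.ext h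
  have h2 := Tf.equivFin.symm.injective h1
  exact Fin.cast_injective _ h2

/-- the determinant polynomial -/
noncomputable def detp (k : Fin K) (Tf : Finset (MNF K t)) (hT : Tf.card = 2*ε) : R2 :=
  Matrix.det (Matrix.of fun s i : Fin (2*ε) => Ppoly K t ε k (enum K t ε Tf hT i) s)

lemma detp_ne_zero (k : Fin K) (Tf : Finset (MNF K t)) (hT : Tf.card = 2*ε)
    (hsub : ∀ f ∈ Tf, k ∈ f.1) : detp K t ε k Tf hT ≠ 0 := by
  classical
  set en := enum K t ε Tf hT with hen
  have hkmem : ∀ i, k ∈ (en i).1 := fun i => hsub _ (enum_mem K t ε Tf hT i)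
  set Dg : Fin (2*ε) → Fin (2*ε) → ℕ := fun s i =>
    (K - t) * uN K ε k s + τF K t k (en i) + (2*ε - 1 - (s:ℕ)) * μF K t (en i) with hDg
  have hP : ∀ s i : Fin (2*ε), (Ppoly K t ε k (en i) s).Monic ∧
      (Ppoly K t ε k (en i) s).natDegree = Dg s i :=
    fun s i => Ppoly_monic K t ε (hkmem i) s
  have hcinj : Function.Injective (fun s : Fin (2*ε) => 2*ε - 1 - (s:ℕ)) := by
    intro s1 s2 h
    simp only at h
    have := s1.isLt
    have := s2.isLt
    exact Fin.ext (by omega)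
  have hμinj : Function.Injective (fun i : Fin (2*ε) => μF K t (en i)) :=
    fun i j h => enum_inj K t ε Tf hT (μF_inj K t h)
  obtain ⟨σ0, hσ0⟩ := unique_max_assignment (fun s : Fin (2*ε) => 2*ε - 1 - (s:ℕ))
    (fun i => μF K t (en i)) hcinj hμinj
  apply det_ne_zero_unique_max _ Dg (fun s i => hP s i) σ0
  intro σ hσ
  have hkey := hσ0 σ hσ
  simp only [hDg]
  rw [Finset.sum_add_distrib, Finset.sum_add_distrib,
    Finset.sum_add_distrib, Finset.sum_add_distrib]
  have hconst : ∑ i, (K - t) * uN K ε k (σ i) = ∑ i, (K - t) * uN K ε k (σ0 i) := by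
    rw [Equiv.sum_comp σ (fun s => (K - t) * uN K ε k s),
      Equiv.sum_comp σ0 (fun s => (K - t) * uN K ε k s)]
  omega

/-- total version of `detp` -/
noncomputable def detpT (k : Fin K) (Tf : Finset (MNF K t)) : R2 :=
  if hT : Tf.card = 2*ε then detp K t ε k Tf hT else 1

end MNC

open MNC




lemma achievable (K t ε : ℕ) (ht2 : 2 ≤ t) (htK : t ≤ K - 1) (hε : 1 ≤ ε)
    (het : 2*ε ≤ t) :
    ∃ (F : Type) (inst1 : Field F) (inst2 : Fintype F)
      (H : Matrix (Fin (2*ε*(K-t)+1)) (MNF K t) F),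
      @KerProp (MNF K t) (Fin K) _ F inst1
        (fun k : Fin K => univ.filter (fun f : MNF K t => k ∈ f.1)) ε _ H := by
  classical
  have hK3 : 3 ≤ K := by omega
  set Xk : Fin K → Finset (MNF K t) := fun k => univ.filter (fun f : MNF K t => k ∈ f.1)
    with hXk
  have hXmem : ∀ (k : Fin K) (f : MNF K t), f ∈ Xk k ↔ k ∈ f.1 := by
    intro k f; simp [hXk]
  set Pt : R2 := ∏ k : Fin K, ∏ T ∈ Finset.powersetCard (2*ε) (Xk k),
      detpT K t ε k T with hPt
  have hPtne : Pt ≠ 0 := by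
    rw [hPt]
    apply Finset.prod_ne_zero_iff.mpr
    intro k _
    apply Finset.prod_ne_zero_iff.mpr
    intro T hT
    unfold detpT
    rcases Finset.mem_powersetCard.mp hT with ⟨hT1, hT2⟩
    rw [dif_pos hT2]
    apply detp_ne_zero
    intro f hf
    exact (hXmem k f).mp (hT1 hf)
  -- pick an irreducible polynomial not dividing Pt
  have hXPne : (X : R2) * Pt ≠ 0 := mul_ne_zero X_ne_zero hPtne
  have hdeg1 : ((X : R2) * Pt + 1).natDegree = 1 + Pt.natDegree := by
    have h1 : ((X : R2) * Pt).natDegree = 1 + Pt.natDegree := by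
      rw [natDegree_mul X_ne_zero hPtne, natDegree_X]
    rw [natDegree_add_eq_left_of_natDegree_lt (by rw [h1, natDegree_one]; omega), h1]
  have hne0 : (X : R2) * Pt + 1 ≠ 0 := by
    intro hc
    rw [hc, natDegree_zero] at hdeg1
    omega
  have hnu : ¬ IsUnit ((X : R2) * Pt + 1) := by
    intro hu
    have := natDegree_eq_zero_of_isUnit hu
    omega
  obtain ⟨h, hirr, hdvd⟩ := WfDvdMonoid.exists_irreducible_factor hnu hne0
  have hhne : ¬ (h ∣ Pt) := by
    intro hdvd2
    have h1 : h ∣ (X : R2) * Pt := hdvd2.mul_left X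
    have h2 : h ∣ 1 := (dvd_add_right h1).mp hdvd
    exact hirr.not_isUnit (isUnit_of_dvd_one h2)
  haveI hfact : Fact (Irreducible h) := ⟨hirr⟩
  haveI : Module.Finite (ZMod 2) (AdjoinRoot h) :=
    Module.Finite.of_basis (AdjoinRoot.powerBasis hirr.ne_zero).basis
  haveI : Finite (AdjoinRoot h) := Module.finite_of_finite (ZMod 2)
  letI : Fintype (AdjoinRoot h) := Fintype.ofFinite _
  set φ : R2 →+* (AdjoinRoot h) := AdjoinRoot.mk h with hφ
  set hpol : MNF K t → Polynomial (AdjoinRoot h) := fun f =>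
    ∏ j ∈ univ \ f.1, ∏ s' : Fin (2*ε),
      (Polynomial.X - Polynomial.C (φ ((X:R2) ^ (eN K ε j s')))) with hhpol
  have hdegle : ∀ f : MNF K t, (hpol f).natDegree ≤ 2*ε*(K-t) := by
    intro f
    calc (hpol f).natDegree ≤ ∑ j ∈ univ \ f.1, (∏ s' : Fin (2*ε),
          ((Polynomial.X : Polynomial (AdjoinRoot h)) - Polynomial.C (φ ((X:R2) ^ (eN K ε j s'))))).natDegree :=
          natDegree_prod_le _ _
      _ ≤ ∑ j ∈ univ \ f.1, 2*ε := by
          apply Finset.sum_le_sum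
          intro j _
          calc _ ≤ ∑ s' : Fin (2*ε), ((Polynomial.X : Polynomial (AdjoinRoot h)) -
                Polynomial.C (φ ((X:R2) ^ (eN K ε j s')))).natDegree := natDegree_prod_le _ _
            _ ≤ ∑ s' : Fin (2*ε), 1 := Finset.sum_le_sum
                (fun s' _ => natDegree_X_sub_C_le _)
            _ = 2*ε := by simp
      _ = (K - t) * (2*ε) := by
          rw [Finset.sum_const, Finset.card_sdiff_of_subset (Finset.subset_univ _), Finset.card_univ,
            Fintype.card_fin, f.2, smul_eq_mul]
      _ = 2*ε*(K-t) := Nat.mul_comm _ _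
  set H : Matrix (Fin (2*ε*(K-t)+1)) (MNF K t) (AdjoinRoot h) := fun i f => (hpol f).coeff i with hH
  refine ⟨(AdjoinRoot h), inferInstance, inferInstance, H, ?_⟩
  intro k v hv hsupp f hf
  -- the polynomial combination vanishes
  set q : Polynomial (AdjoinRoot h) := ∑ g : MNF K t, Polynomial.C (v g) * hpol g with hq
  have hqdeg : q.natDegree ≤ 2*ε*(K-t) :=
    natDegree_sum_le_of_forall_le _ _
      (fun g _ => le_trans (natDegree_C_mul_le _ _) (hdegle g))
  have hq0 : q = 0 := by
    apply Polynomial.ext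
    intro n
    rw [Polynomial.coeff_zero]
    by_cases hn : n < 2*ε*(K-t)+1
    · have hvn := congrFun hv ⟨n, hn⟩
      simp only [Matrix.mulVec, dotProduct, Pi.zero_apply] at hvn
      rw [hq, finset_sum_coeff]
      rw [← hvn]
      apply Finset.sum_congr rfl
      intro g _
      rw [Polynomial.coeff_C_mul]
      rw [hH]
      exact mul_comm _ _
    · exact coeff_eq_zero_of_natDegree_lt (lt_of_le_of_lt hqdeg (by omega))
  -- support inside a 2ε-set T
  set S : Finset (MNF K t) := univ.filter (fun g => v g ≠ 0 ∧ g ∈ Xk k) with hS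
  have hScard : S.card ≤ 2 * ε := by
    have hcoe : (↑S : Set (MNF K t)) = {g | v g ≠ 0 ∧ g ∈ Xk k} := by
      ext x; simp [hS]
    rw [← Set.ncard_coe_finset, hcoe]
    exact hsupp
  have hSsub : S ⊆ Xk k := fun g hg => by
    rw [hS, Finset.mem_filter] at hg
    exact hg.2.2
  have hXkcard : 2*ε ≤ (Xk k).card := by
    set f0 : MNF K t := ⟨Finset.Iio (⟨t, by omega⟩ : Fin K), by rw [Fin.card_Iio]⟩ with hf0
    set ι : Finset (Fin K) → MNF K t := fun s =>
      if hc : (insert k s).card = t then ⟨insert k s, hc⟩ else f0 with hι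
    have h1 : ((univ.erase k).powersetCard (t-1)).card ≤ (Xk k).card := by
      apply Finset.card_le_card_of_injOn ι
      · intro s hs
        rw [Finset.mem_coe, Finset.mem_powersetCard] at hs
        have hknot : k ∉ s := fun hc => (Finset.mem_erase.mp (hs.1 hc)).1 rfl
        have hcard : (insert k s).card = t := by
          rw [Finset.card_insert_of_notMem hknot, hs.2]
          omega
        rw [Finset.mem_coe, hXmem, hι]
        simp only [dif_pos hcard]
        exact Finset.mem_insert_self k s
      · intro s1 hs1 s2 hs2 h12
        rw [Finset.mem_coe, Finset.mem_powersetCard] at hs1 hs2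
        have hk1 : k ∉ s1 := fun hc => (Finset.mem_erase.mp (hs1.1 hc)).1 rfl
        have hk2 : k ∉ s2 := fun hc => (Finset.mem_erase.mp (hs2.1 hc)).1 rfl
        have hc1 : (insert k s1).card = t := by
          rw [Finset.card_insert_of_notMem hk1, hs1.2]; omega
        have hc2 : (insert k s2).card = t := by
          rw [Finset.card_insert_of_notMem hk2, hs2.2]; omega
        rw [hι] at h12
        simp only [dif_pos hc1, dif_pos hc2] at h12
        have h13 : insert k s1 = insert k s2 := congrArg Subtype.val h12
        have := congrArg (fun u => Finset.erase u k) h13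
        simpa [Finset.erase_insert hk1, Finset.erase_insert hk2] using this
    have h2 : ((univ.erase k).powersetCard (t-1)).card = Nat.choose (K-1) (t-1) := by
      rw [Finset.card_powersetCard, Finset.card_erase_of_mem (mem_univ k),
        Finset.card_univ, Fintype.card_fin]
    have h3 : t ≤ Nat.choose (K-1) (t-1) := by
      have ha : Nat.choose t (t - 1) = t := by
        have h4 : t - (t - 1) = 1 := by omega
        rw [← Nat.choose_symm (by omega : t - 1 ≤ t), h4, Nat.choose_one_right]
      calc t = Nat.choose t (t-1) := ha.symm
        _ ≤ Nat.choose (K-1) (t-1) := Nat.choose_le_choose _ (by omega)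
    omega
  obtain ⟨T, hST, hTX, hTcard⟩ := Finset.exists_subsuperset_card_eq hSsub hScard hXkcard
  -- evaluation identities
  have heval : ∀ (g : MNF K t) (s : Fin (2*ε)),
      (hpol g).eval (φ ((X:R2) ^ (eN K ε k s))) = φ (Ppoly K t ε k g s) := by
    intro g s
    rw [hhpol]
    simp only []
    rw [Polynomial.eval_prod]
    unfold Ppoly
    rw [map_prod φ]
    apply Finset.prod_congr rfl
    intro j _
    rw [Polynomial.eval_prod, map_prod φ]
    apply Finset.prod_congr rfl
    intro s' _
    rw [Polynomial.eval_sub, Polynomial.eval_X, Polynomial.eval_C, map_sub φ]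
  have hzero : ∀ g : MNF K t, g ∉ Xk k → ∀ s : Fin (2*ε),
      (hpol g).eval (φ ((X:R2) ^ (eN K ε k s))) = 0 := by
    intro g hg s
    rw [heval]
    have hkc : k ∈ univ \ g.1 :=
      Finset.mem_sdiff.mpr ⟨mem_univ k, fun hc => hg ((hXmem k g).mpr hc)⟩
    have : Ppoly K t ε k g s = 0 := by
      unfold Ppoly
      apply Finset.prod_eq_zero hkc
      apply Finset.prod_eq_zero (mem_univ s)
      rw [sub_self]
    rw [this, map_zero]
  -- reindexing over T
  set en : Fin (2*ε) → MNF K t := enum K t ε T hTcard with hen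
  set e2 : Fin (2*ε) ≃ {x // x ∈ T} := (finCongr hTcard.symm).trans T.equivFin.symm with he2
  have he2en : ∀ i, (e2 i).1 = en i := fun i => rfl
  have hreidx : ∀ (Fn : MNF K t → (AdjoinRoot h)), ∑ g ∈ T, Fn g = ∑ i : Fin (2*ε), Fn (en i) := by
    intro Fn
    rw [← Finset.sum_coe_sort T Fn]
    rw [← Equiv.sum_comp e2 (fun x : {x // x ∈ T} => Fn x.1)]
    exact Finset.sum_congr rfl (fun i _ => congrArg Fn (he2en i))
  -- the linear relation
  have hrel : ∀ s : Fin (2*ε), ∑ i : Fin (2*ε), φ (Ppoly K t ε k (en i) s) * v (en i) = 0 := by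
    intro s
    have h0 := congrArg (Polynomial.eval (φ ((X:R2) ^ (eN K ε k s)))) hq0
    rw [hq, Polynomial.eval_finset_sum, Polynomial.eval_zero] at h0
    simp only [Polynomial.eval_mul, Polynomial.eval_C] at h0
    have hvanish : ∀ g ∈ (univ : Finset (MNF K t)), g ∉ T →
        v g * (hpol g).eval (φ ((X:R2) ^ (eN K ε k s))) = 0 := by
      intro g _ hgT
      by_cases hgX : g ∈ Xk k
      · have hvg : v g = 0 := by
          by_contra hvg
          exact hgT (hST (by rw [hS]; simp [hvg, hgX]))
        rw [hvg, zero_mul]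
      · rw [hzero g hgX, mul_zero]
    have hsplit : ∑ g ∈ T, v g * (hpol g).eval (φ ((X:R2) ^ (eN K ε k s))) = 0 := by
      rw [Finset.sum_subset (Finset.subset_univ T) hvanish]
      exact h0
    rw [hreidx] at hsplit
    rw [← hsplit]
    apply Finset.sum_congr rfl
    intro i _
    rw [heval]
    exact mul_comm _ _
  -- determinant is nonzero
  set Mp : Matrix (Fin (2*ε)) (Fin (2*ε)) R2 :=
    Matrix.of fun s i : Fin (2*ε) => Ppoly K t ε k (en i) s with hMp
  have hMpdet : Mp.det = detp K t ε k T hTcard := by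
    unfold MNC.detp
    rw [hMp, hen]
  have hdet : φ Mp.det ≠ 0 := by
    rw [hMpdet]
    have hdvd1 : detp K t ε k T hTcard ∣ Pt := by
      have hTmem : T ∈ Finset.powersetCard (2*ε) (Xk k) :=
        Finset.mem_powersetCard.mpr ⟨hTX, hTcard⟩
      have heq : detp K t ε k T hTcard = detpT K t ε k T := by
        unfold detpT
        rw [dif_pos hTcard]
      have hfac : detpT K t ε k T ∣
          ∏ T' ∈ Finset.powersetCard (2*ε) (Xk k), detpT K t ε k T' :=
        Finset.dvd_prod_of_mem _ hTmem
      have hfac2 : (∏ T' ∈ Finset.powersetCard (2*ε) (Xk k), detpT K t ε k T') ∣ Pt := by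
        rw [hPt]
        exact Finset.dvd_prod_of_mem _ (mem_univ k)
      rw [heq]
      exact dvd_trans hfac hfac2
    rw [hφ]
    exact fun hz => hhne (dvd_trans (AdjoinRoot.mk_eq_zero.mp hz) hdvd1)
  have hdetF : (Mp.map φ).det ≠ 0 := by
    have : Mp.map φ = φ.mapMatrix Mp := rfl
    rw [this, ← RingHom.map_det]
    exact hdet
  -- conclude
  set c : Fin (2*ε) → (AdjoinRoot h) := fun i => v (en i) with hc
  have hmv : (Mp.map φ).mulVec c = 0 := by
    funext s
    simp only [Matrix.mulVec, dotProduct, Matrix.map_apply, Pi.zero_apply]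
    exact hrel s
  have hc0 : c = 0 := Matrix.eq_zero_of_mulVec_eq_zero hdetF hmv
  by_cases hfT : f ∈ T
  · have : f = en (e2.symm ⟨f, hfT⟩) := by
      rw [← he2en, Equiv.apply_symm_apply]
    rw [this]
    exact congrFun hc0 _
  · by_contra hvf
    have hfS : f ∈ S := by
      rw [hS, Finset.mem_filter]
      exact ⟨mem_univ f, hvf, hf⟩
    exact hfT (hST hfS)



/-- For the Maddah-Ali & Niesen placement with parameters `K, t`
(subfiles: `t`-subsets of `{1,…,K}`, nodes: `{1,…,K}`, `f ∈ X k ↔ k ∈ f.1`), assume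
`ε ≥ 1`, `2 ≤ t ≤ K − 1`, `2ε ≤ t` and `C(K−1, t−1) ≥ 2ε + 1`. Then
`ℓ*(X, ε) = 2ε(K − t) + 1`. -/
theorem MN_optLen_regime1 (K t : ℕ) (ht2 : 2 ≤ t) (htK : t ≤ K - 1)
    (ε : ℕ) (hε : 1 ≤ ε) (het : 2 * ε ≤ t)
    (hZ : 2 * ε + 1 ≤ Nat.choose (K - 1) (t - 1)) :
    optLen (fun k : Fin K =>
        Finset.univ.filter (fun f : {s : Finset (Fin K) // s.card = t} => k ∈ f.1)) ε =
      2 * ε * (K - t) + 1 := by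
  classical
  rw [optLen]
  obtain ⟨F0, i1, i2, H0, hker0⟩ := achievable K t ε ht2 htK hε het
  have hmem : (2 * ε * (K - t) + 1) ∈ {l : ℕ |
      ∃ (F : Type) (inst1 : Field F) (inst2 : Fintype F)
        (H : Matrix (Fin l) {s : Finset (Fin K) // s.card = t} F),
        @ValidEncoder {s : Finset (Fin K) // s.card = t} (Fin K) _ F inst1 inst2
          (fun k : Fin K =>
            Finset.univ.filter (fun f : {s : Finset (Fin K) // s.card = t} => k ∈ f.1)) ε _ H} :=
    ⟨F0, i1, i2, H0, @kerProp_validEncoder (MNF K t) (Fin K) _ F0 i1 i2 _ ε _ H0 hker0⟩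
  apply le_antisymm
  · exact Nat.sInf_le hmem
  · apply le_csInf ⟨_, hmem⟩
    rintro l ⟨F, j1, j2, H, hval⟩
    exact MN_lowerBound K t ε ht2 htK hε het
      (@validEncoder_kerProp (MNF K t) (Fin K) _ F j1 j2 _ ε l H hval)
end

section
/- For the Maddah-Ali & Niesen placement with parameters K and t, assume ε ≥ 1, t ≥ 2, and C(K−1, t−1) ≥ 2ε + 1. Then ℓ*(X,ε) ≥ 2ε · (K − 1 − ⌈(t−1) · (2ε)^{1/(t−1)}⌉), where (2ε)^{1/(t−1)} denotes the real (t−1)-th root of 2ε and the inequality is read in the real numbers. -/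
open Matrix Finset

lemma pow_div_le_choose : ∀ (k n : ℕ), k ≤ n → ((n:ℝ)/k)^k ≤ n.choose k := by
  intro k
  induction k with
  | zero => intro n _; simp
  | succ k ih =>
    intro n h
    rcases Nat.eq_zero_or_pos k with rfl | hk
    · simpa using Nat.cast_le.mpr (by simpa using Nat.one_le_iff_ne_zero.mpr (by omega) : 1 ≤ n.choose 1)
    obtain ⟨m, rfl⟩ : ∃ m, n = m + 1 := ⟨n - 1, by omega⟩

    have hkm : k ≤ m := by omega
    have hih := ih m hkm
    have hkey : ((m+1:ℝ)) * (m.choose k) = ((m+1).choose (k+1)) * (k+1) := by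
      have := Nat.add_one_mul_choose_eq m k
      exact_mod_cast congrArg (Nat.cast : ℕ → ℝ) this
    have h1 : ((m+1:ℝ))/(k+1) ≤ (m:ℝ)/k := by
      rw [div_le_div_iff₀ (by positivity) (by exact_mod_cast hk)]
      have : (k:ℝ) + 1 ≤ m + 1 := by exact_mod_cast Nat.succ_le_succ hkm
      nlinarith [this]
    have h0 : (0:ℝ) ≤ (m+1:ℝ)/(k+1) := by positivity
    calc ((↑(m+1):ℝ)/(↑(k+1)))^(k+1) = ((m+1:ℝ)/(k+1)) * ((m+1:ℝ)/(k+1))^k := by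
          push_cast; ring
      _ ≤ ((m+1:ℝ)/(k+1)) * ((m:ℝ)/k)^k := by
          apply mul_le_mul_of_nonneg_left (pow_le_pow_left₀ h0 h1 k) h0
      _ ≤ ((m+1:ℝ)/(k+1)) * (m.choose k) := by
          apply mul_le_mul_of_nonneg_left hih h0
      _ = ((m+1).choose (k+1) : ℝ) := by
          field_simp
          nlinarith [hkey]

lemma key_zero {𝓕 𝓚 : Type} [Fintype 𝓕] [DecidableEq 𝓕] {F : Type} [Field F] [Fintype F]
    {X : 𝓚 → Finset 𝓕} {ε : ℕ} {l : ℕ} {H : Matrix (Fin l) 𝓕 F}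
    (hH : ValidEncoder F X ε H) (k : 𝓚) (c : 𝓕 → F)
    (hc : H.mulVec c = 0)
    (T1 T2 : Finset 𝓕) (hT1 : T1.card ≤ ε) (hT2 : T2.card ≤ ε)
    (hdisj : Disjoint T1 T2)
    (hsupp : ∀ f ∈ X k, c f ≠ 0 → f ∈ T1 ∪ T2) :
    ∀ f ∈ X k, c f = 0 := by
  obtain ⟨D, hD⟩ := hH k
  set e1 : 𝓕 → F := fun f => if f ∈ T1 then c f else 0 with he1
  set e2 : 𝓕 → F := fun f => if f ∈ T2 then -(c f) else 0 with he2
  have hXc : ∀ f ∈ X k, e1 f - e2 f = c f := by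
    intro f hf
    by_cases h1 : f ∈ T1
    · have h2 : f ∉ T2 := fun h2 => (Finset.disjoint_left.mp hdisj h1) h2
      simp [he1, he2, h1, h2]
    · by_cases h2 : f ∈ T2
      · simp [he1, he2, h1, h2]
      · by_cases hcf : c f = 0
        · simp [he1, he2, h1, h2, hcf]
        · exact absurd (hsupp f hf hcf) (by simp [h1, h2])
  have hw1 : ∀ {T : Finset 𝓕} (e : 𝓕 → F), (∀ f, e f ≠ 0 → f ∈ T) → T.card ≤ ε →
      {f | e f ≠ 0}.ncard ≤ ε := by
    intro T e hsub hcard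
    calc {f | e f ≠ 0}.ncard ≤ (↑T : Set 𝓕).ncard :=
          Set.ncard_le_ncard (fun f hf => hsub f hf) T.finite_toSet
      _ = T.card := Set.ncard_coe_finset T
      _ ≤ ε := hcard
  have hne1 : {f | e1 f ≠ 0}.ncard ≤ ε :=
    hw1 e1 (fun f hf => by by_contra h; simp [he1, h] at hf) hT1
  have hne2 : {f | e2 f ≠ 0}.ncard ≤ ε :=
    hw1 e2 (fun f hf => by by_contra h; simp [he2, h] at hf) hT2
  have hA := hD 0 e1 hne1
  set w2 : 𝓕 → F := fun f => e1 f - c f - e2 f with hw2def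
  have hB := hD w2 e2 hne2
  have hvec : w2 + e2 = (0 : 𝓕 → F) + e1 - c := by
    funext f
    simp only [Pi.add_apply, Pi.sub_apply, Pi.zero_apply, hw2def]
    ring
  have hmul : H.mulVec (w2 + e2) = H.mulVec ((0 : 𝓕 → F) + e1) := by
    rw [hvec, Matrix.mulVec_sub, hc, sub_zero]
  have hside : (fun f : {f // f ∈ X k} => w2 f.1) = (fun f : {f // f ∈ X k} => (0 : 𝓕 → F) f.1) := by
    funext f
    have := hXc f.1 f.2
    simp [hw2def]
    linear_combination this
  intro f hf
  have : D (H.mulVec ((0:𝓕 → F) + e1)) (fun f : {f // f ∈ X k} => (0 : 𝓕 → F) f.1) = fun f => (w2 + e2) f.1 := by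
    rw [← hmul, ← hside]; exact hB
  have heq := congrFun (hA.symm.trans this) ⟨f, hf⟩
  simp only [Pi.add_apply, Pi.zero_apply, zero_add] at heq
  have hx := hXc f hf
  simp [hw2def] at heq
  linear_combination heq

lemma exists_encoder {𝓕 𝓚 : Type} [Fintype 𝓕] [DecidableEq 𝓕] (X : 𝓚 → Finset 𝓕) (ε : ℕ) :
    ∃ (l : ℕ) (F : Type) (inst1 : Field F) (inst2 : Fintype F)
      (H : Matrix (Fin l) 𝓕 F), @ValidEncoder 𝓕 𝓚 _ F inst1 inst2 X ε l H := by
  classical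
  obtain ⟨eq⟩ : Nonempty (𝓕 ≃ Fin (Fintype.card 𝓕)) := ⟨Fintype.equivFin 𝓕⟩
  refine ⟨Fintype.card 𝓕, ZMod 2, inferInstance, inferInstance,
    fun i f => if f = eq.symm i then 1 else 0, ?_⟩
  intro k
  refine ⟨fun y _ => fun f => y (eq f.1), ?_⟩
  intro w e _
  funext f
  simp only [Matrix.mulVec, dotProduct]
  rw [Finset.sum_eq_single (eq.symm (eq f.1))]
  · simp
  · intro b _ hb; rw [Equiv.symm_apply_apply] at hb; simp [hb]
  · intro h; exact absurd (Finset.mem_univ _) h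

lemma main_bound (K t ε : ℕ) (ht2 : 2 ≤ t) (s : ℕ) (hsK : s ≤ K)
    (hchoose : 2 * ε ≤ Nat.choose s (t - 1))
    {l : ℕ} {F : Type} [Field F] [Fintype F]
    {H : Matrix (Fin l) {f : Finset (Fin K) // f.card = t} F}
    (hH : ValidEncoder F
      (fun k : Fin K => Finset.univ.filter
        (fun f : {s : Finset (Fin K) // s.card = t} => k ∈ f.1)) ε H) :
    (K - s) * (2 * ε) ≤ l := by
  classical
  let 𝓕 := {f : Finset (Fin K) // f.card = t}
  obtain ⟨A, -, hAcard⟩ := Finset.exists_subset_card_eq (s := (Finset.univ : Finset (Fin K))) (n := s)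
    (by simpa using hsK)
  obtain ⟨𝓑, h𝓑sub, h𝓑card⟩ := Finset.exists_subset_card_eq (s := A.powersetCard (t - 1)) (n := 2 * ε)
    (by rwa [Finset.card_powersetCard, hAcard])
  -- facts about members of 𝓑
  have hB : ∀ B ∈ 𝓑, B ⊆ A ∧ B.card = t - 1 := by
    intro B hBmem
    exact Finset.mem_powersetCard.mp (h𝓑sub hBmem)
  -- the map ι
  have hcard : ∀ (k : ↥Aᶜ) (B : ↥𝓑), (insert k.1 B.1).card = t := by
    rintro ⟨k, hk⟩ ⟨B, hBm⟩
    obtain ⟨hBA, hBc⟩ := hB B hBm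
    have hkA : k ∉ A := Finset.mem_compl.mp hk
    have : k ∉ B := fun h => hkA (hBA h)
    rw [Finset.card_insert_of_notMem this, hBc]
    omega
  set ι : ↥(Aᶜ) × ↥𝓑 → 𝓕 := fun p => ⟨insert p.1.1 p.2.1, hcard p.1 p.2⟩ with hι
  have hinj : Function.Injective ι := by
    rintro ⟨⟨k, hk⟩, ⟨B, hBm⟩⟩ ⟨⟨k', hk'⟩, ⟨B', hBm'⟩⟩ h
    have hset : insert k B = insert k' B' := congrArg Subtype.val h
    have hkA : k ∉ A := Finset.mem_compl.mp hk
    have hk'A : k' ∉ A := Finset.mem_compl.mp hk'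
    have hBA := (hB B hBm).1
    have hB'A := (hB B' hBm').1
    have hkk' : k = k' := by
      have : k' ∈ insert k B := hset ▸ Finset.mem_insert_self k' B'
      rcases Finset.mem_insert.mp this with h | h
      · exact h.symm
      · exact absurd (hBA h) hk'A
    subst hkk'
    have hBB' : B = B' := by
      have h1 : (insert k B).erase k = B := Finset.erase_insert (fun h => hkA (hBA h))
      have h2 : (insert k B').erase k = B' := Finset.erase_insert (fun h => hkA (hB'A h))
      rw [← h1, ← h2, hset]
    subst hBB'
    rfl
  -- linear independence of the chosen columns
  set v : ↥(Aᶜ) × ↥𝓑 → (Fin l → F) := fun p => fun i => H i (ι p) with hv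
  have hli : LinearIndependent F v := by
    rw [Fintype.linearIndependent_iff]
    intro g hg p0
    set c0 : 𝓕 → F := fun f => ∑ p : ↥(Aᶜ) × ↥𝓑, if f = ι p then g p else 0 with hc0
    have hc0ι : ∀ p : ↥(Aᶜ) × ↥𝓑, c0 (ι p) = g p := by
      intro p
      show (∑ p' : ↥(Aᶜ) × ↥𝓑, if ι p = ι p' then g p' else 0) = g p
      rw [Finset.sum_eq_single p]
      · simp
      · intro p' _ hp'
        have : ι p ≠ ι p' := fun h => hp' (hinj h).symm
        simp [this]
      · intro h; exact absurd (Finset.mem_univ _) h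
    have hmv : H.mulVec c0 = 0 := by
      funext i
      have hgi := congrFun hg i
      simp only [Finset.sum_apply, Pi.smul_apply, smul_eq_mul, Pi.zero_apply] at hgi
      simp only [Matrix.mulVec, dotProduct, hc0, Finset.mul_sum, Pi.zero_apply]
      rw [Finset.sum_comm]
      calc (∑ p : ↥(Aᶜ) × ↥𝓑, ∑ f : 𝓕, H i f * if f = ι p then g p else 0)
          = ∑ p : ↥(Aᶜ) × ↥𝓑, g p * v p i := by
            apply Finset.sum_congr rfl
            intro p _
            rw [Finset.sum_eq_single (ι p)]
            · simp [hv, mul_comm]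
            · intro f _ hf; simp [hf]
            · intro h; exact absurd (Finset.mem_univ _) h
        _ = 0 := hgi
    -- apply key_zero at node p0.1
    set k : ↥(Aᶜ) := p0.1 with hk
    set T : Finset 𝓕 := 𝓑.attach.image (fun B => ι (k, B)) with hT
    have hTcard : T.card = 2 * ε := by
      rw [hT, Finset.card_image_of_injective _ (fun B B' hBB' => by
        have := hinj hBB'; exact (Prod.mk.injEq _ _ _ _ ▸ this).2 ),
        Finset.card_attach, h𝓑card]
    obtain ⟨T1, hT1sub, hT1card⟩ := Finset.exists_subset_card_eq (s := T) (n := ε) (by omega)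
    have hT2card : (T \ T1).card = ε := by
      rw [Finset.card_sdiff_of_subset hT1sub, hTcard, hT1card]; omega
    have hzero : ∀ f ∈ Finset.univ.filter (fun f : 𝓕 => k.1 ∈ f.1), c0 f = 0 := by
      apply key_zero hH k.1 c0 hmv T1 (T \ T1) (le_of_eq hT1card) (le_of_eq hT2card)
        disjoint_sdiff
      intro f hf hne
      rw [Finset.union_sdiff_of_subset hT1sub]
      -- f has nonzero coefficient, so f = ι p for some p; and k ∈ f forces p.1 = k
      obtain ⟨p, -, hp⟩ := Finset.exists_ne_zero_of_sum_ne_zero (by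
        simpa only [hc0] using hne)
      have hfp : f = ι p := by
        by_contra h; simp [h] at hp
      have hkf : k.1 ∈ f.1 := (Finset.mem_filter.mp hf).2
      have hp1 : p.1 = k := by
        rw [hfp] at hkf
        have hkA : k.1 ∉ A := Finset.mem_compl.mp k.2
        rcases Finset.mem_insert.mp hkf with h | h
        · exact Subtype.ext h.symm
        · exact absurd ((hB p.2.1 p.2.2).1 h) hkA
      rw [hT, hfp]
      apply Finset.mem_image.mpr
      exact ⟨p.2, Finset.mem_attach _ _, by rw [← hp1]⟩
    have : c0 (ι p0) = 0 := by
      apply hzero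
      simp only [Finset.mem_filter, Finset.mem_univ, true_and]
      exact Finset.mem_insert_self _ _
    rwa [hc0ι p0] at this
  -- conclude
  have hcard2 : Fintype.card (↥(Aᶜ) × ↥𝓑) = (K - s) * (2 * ε) := by
    rw [Fintype.card_prod, Fintype.card_coe, Fintype.card_coe,
      Finset.card_compl, hAcard, h𝓑card, Fintype.card_fin]
  calc (K - s) * (2 * ε) = Fintype.card (↥(Aᶜ) × ↥𝓑) := hcard2.symm
    _ ≤ Module.finrank F (Fin l → F) := hli.fintype_card_le_finrank
    _ = l := Module.finrank_fin_fun F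

/-- For the Maddah-Ali & Niesen placement with parameters `K, t`,
assume `ε ≥ 1`, `t ≥ 2`, `t ≤ K` and `C(K−1, t−1) ≥ 2ε + 1`. Then, in the reals,
`ℓ*(X, ε) ≥ 2ε · (K − 1 − ⌈(t−1) · (2ε)^{1/(t−1)}⌉)`, where the root is the real
`(t−1)`-th root of `2ε`. -/
theorem MN_lower_bound_sparse (K t : ℕ) (ht2 : 2 ≤ t) (htK : t ≤ K)
    (ε : ℕ) (hε : 1 ≤ ε) (hZ : 2 * ε + 1 ≤ Nat.choose (K - 1) (t - 1)) :
    (2 * (ε : ℝ)) * ((K : ℝ) - 1 -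
        (⌈((t : ℝ) - 1) * ((2 * (ε : ℝ)) ^ (((t : ℝ) - 1)⁻¹))⌉ : ℤ)) ≤
      (optLen (fun k : Fin K =>
        Finset.univ.filter (fun f : {s : Finset (Fin K) // s.card = t} => k ∈ f.1)) ε :
          ℝ) := by
  classical
  have htR : (2:ℝ) ≤ (t:ℝ) := by exact_mod_cast ht2
  have hεR : (1:ℝ) ≤ (ε:ℝ) := by exact_mod_cast hε
  set cc : ℤ := ⌈((t : ℝ) - 1) * ((2 * (ε : ℝ)) ^ (((t : ℝ) - 1)⁻¹))⌉ with hccdef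
  have hrpow1 : (1:ℝ) ≤ (2 * (ε:ℝ)) ^ (((t:ℝ)-1)⁻¹) :=
    Real.one_le_rpow (by linarith) (by rw [inv_nonneg]; linarith)
  have htm1 : ((t:ℝ) - 1) = ((t - 1 : ℕ) : ℝ) := by
    have := Nat.cast_sub (show 1 ≤ t by omega) (R := ℝ)
    rw [this]; norm_num
  have hccge : ((t:ℝ) - 1) * ((2 * (ε : ℝ)) ^ (((t : ℝ) - 1)⁻¹)) ≤ (cc : ℝ) := Int.le_ceil _
  have hcc1 : ((t - 1 : ℕ) : ℝ) ≤ (cc : ℝ) := by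
    rw [← htm1]
    nlinarith
  have hccpos : (0:ℤ) ≤ cc := by
    have : (0:ℝ) ≤ (cc:ℝ) := le_trans (show (0:ℝ) ≤ ((t:ℝ)-1) * ((2*(ε:ℝ)) ^ (((t:ℝ)-1)⁻¹)) by nlinarith) hccge
    exact_mod_cast this
  set s : ℕ := cc.toNat with hs
  have hcs : (cc : ℝ) = (s : ℝ) := by
    rw [hs]
    exact_mod_cast (Int.toNat_of_nonneg hccpos).symm
  by_cases hKs : K ≤ s + 1
  · -- trivial case: LHS ≤ 0
    have hK1 : (K:ℝ) - 1 - cc ≤ 0 := by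
      rw [hcs]
      have : (K:ℝ) ≤ (s:ℝ) + 1 := by exact_mod_cast hKs
      linarith
    have h0 : (0:ℝ) ≤ (optLen (fun k : Fin K =>
        Finset.univ.filter (fun f : {s : Finset (Fin K) // s.card = t} => k ∈ f.1)) ε : ℝ) :=
      Nat.cast_nonneg _
    nlinarith
  · push_neg at hKs
    have hsK : s ≤ K := by omega
    -- 2ε ≤ C(s, t-1)
    have hts : (t - 1 : ℕ) ≤ s := by
      have : ((t - 1 : ℕ) : ℝ) ≤ (s : ℝ) := hcs ▸ hcc1
      exact_mod_cast this
    have hkpos : (0:ℝ) < ((t - 1 : ℕ) : ℝ) := by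
      have : 1 ≤ t - 1 := by omega
      exact_mod_cast Nat.lt_of_lt_of_le Nat.zero_lt_one this
    have hdiv : (2 * (ε : ℝ)) ^ (((t : ℝ) - 1)⁻¹) ≤ (s : ℝ) / ((t - 1 : ℕ) : ℝ) := by
      rw [le_div_iff₀ hkpos]
      calc (2 * (ε : ℝ)) ^ (((t : ℝ) - 1)⁻¹) * ((t - 1 : ℕ) : ℝ)
          = ((t:ℝ) - 1) * ((2 * (ε : ℝ)) ^ (((t : ℝ) - 1)⁻¹)) := by rw [htm1]; ring
        _ ≤ (cc : ℝ) := hccge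
        _ = (s : ℝ) := hcs
    have hchoose : 2 * ε ≤ Nat.choose s (t - 1) := by
      have hround : ((2 * (ε:ℝ)) ^ (((t:ℝ) - 1)⁻¹)) ^ (t - 1 : ℕ) = 2 * (ε:ℝ) := by
        rw [← Real.rpow_natCast ((2 * (ε:ℝ)) ^ (((t:ℝ) - 1)⁻¹)) (t-1),
          ← Real.rpow_mul (by positivity), ← htm1, inv_mul_cancel₀ (by linarith),
          Real.rpow_one]
      have h1 : (2 * (ε:ℝ)) ≤ ((s:ℝ) / ((t - 1 : ℕ) : ℝ)) ^ (t - 1 : ℕ) := by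
        rw [← hround]
        exact pow_le_pow_left₀ (by positivity) hdiv _
      have h2 := pow_div_le_choose (t - 1) s hts
      have : (2 * (ε:ℝ)) ≤ (Nat.choose s (t - 1) : ℝ) := le_trans h1 h2
      exact_mod_cast this
    -- extract an optimal encoder
    set S := {l : ℕ | ∃ (F : Type) (inst1 : Field F) (inst2 : Fintype F)
      (H : Matrix (Fin l) {f : Finset (Fin K) // f.card = t} F),
        @ValidEncoder {f : Finset (Fin K) // f.card = t} (Fin K) _ F inst1 inst2
          (fun k : Fin K => Finset.univ.filter
            (fun f : {s : Finset (Fin K) // s.card = t} => k ∈ f.1)) ε l H} with hS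
    have hSne : S.Nonempty := by
      obtain ⟨l, F, i1, i2, H, hH⟩ := exists_encoder
        (fun k : Fin K => Finset.univ.filter
          (fun f : {s : Finset (Fin K) // s.card = t} => k ∈ f.1)) ε
      exact ⟨l, F, i1, i2, H, hH⟩
    have hmem := Nat.sInf_mem hSne
    obtain ⟨F, i1, i2, H, hH⟩ := hmem
    have hbound := @main_bound K t ε ht2 s hsK hchoose (sInf S) F i1 i2 H hH
    have heq : optLen (fun k : Fin K =>
        Finset.univ.filter (fun f : {s : Finset (Fin K) // s.card = t} => k ∈ f.1)) ε
        = sInf S := rfl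
    rw [heq]
    have hb : ((K - s) * (2 * ε) : ℕ) ≤ sInf S := hbound
    have hbR : (((K - s) * (2 * ε) : ℕ) : ℝ) ≤ ((sInf S : ℕ) : ℝ) := by exact_mod_cast hb
    have hKsub : ((K - s : ℕ) : ℝ) = (K : ℝ) - (s : ℝ) := Nat.cast_sub hsK
    have hbR' : ((K:ℝ) - (s:ℝ)) * (2 * (ε:ℝ)) ≤ ((sInf S : ℕ) : ℝ) := by
      calc ((K:ℝ) - (s:ℝ)) * (2 * (ε:ℝ)) = (((K - s) * (2 * ε) : ℕ) : ℝ) := by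
            push_cast [Nat.cast_sub hsK]; ring
        _ ≤ ((sInf S : ℕ) : ℝ) := hbR
    rw [hcs]
    nlinarith
end

section
/- For the Yan et al. / Tang & Ramamoorthy placement with integer parameters q, m ≥ 2, order the pairs (u,v) with u ∈ {1,…,m} and v ∈ Z_q by: (u′,v′) ≺ (u,v) if and only if v′ < v, or v′ = v and u′ < u. Then for every such pair (u,v), the number of subfile indices in X_{(u,v)} that do not belong to X_{(u′,v′)} for any (u′,v′) ≺ (u,v) equals (q − v − 1)^{u−1} · (q − v)^{m−u}, with the convention 0^0 = 1. -/
open Matrix Finset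

/-- For the Yan et al. / Tang & Ramamoorthy placement with parameters
`q, m ≥ 2` (subfiles `Z_q^m`; for `1 ≤ u ≤ m`, `X_{(u,v)} = {s : s_u = v}`), order the
pairs `(u,v)` by `(u′,v′) ≺ (u,v) ↔ v′ < v ∨ (v′ = v ∧ u′ < u)`. The number of subfiles
in `X_{(u,v)}` not in any `X_{(u′,v′)}` with `(u′,v′) ≺ (u,v)` equals
`(q − v − 1)^{u−1} (q − v)^{m−u}` (with `0^0 = 1`). -/
theorem yan_tang_new_subfile_count (q m : ℕ) (hq : 2 ≤ q) (hm : 2 ≤ m)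
    (u v : ℕ) (hu1 : 1 ≤ u) (hum : u ≤ m) (hv : v < q) :
    {s : Fin m → Fin q | s ⟨u - 1, by omega⟩ = ⟨v, hv⟩ ∧
        ∀ u' v' : ℕ, ∀ _ : 1 ≤ u', ∀ _ : u' ≤ m, ∀ hv' : v' < q,
          (v' < v ∨ (v' = v ∧ u' < u)) →
            s ⟨u' - 1, by omega⟩ ≠ ⟨v', hv'⟩}.ncard =
      (q - v - 1) ^ (u - 1) * (q - v) ^ (m - u) := by
  set T : Fin m → Finset (Fin q) := fun i =>
    if i.val < u - 1 then Ioi ⟨v, hv⟩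
    else if i.val = u - 1 then {⟨v, hv⟩} else Ici ⟨v, hv⟩ with hT
  have hset : {s : Fin m → Fin q | s ⟨u - 1, by omega⟩ = ⟨v, hv⟩ ∧
        ∀ u' v' : ℕ, ∀ _ : 1 ≤ u', ∀ _ : u' ≤ m, ∀ hv' : v' < q,
          (v' < v ∨ (v' = v ∧ u' < u)) →
            s ⟨u' - 1, by omega⟩ ≠ ⟨v', hv'⟩} = ↑(Fintype.piFinset T) := by
    ext s
    simp only [Set.mem_setOf_eq, Finset.mem_coe, Fintype.mem_piFinset, hT]
    constructor
    · rintro ⟨h1, h2⟩ i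
      rcases lt_trichotomy i.val (u - 1) with h | h | h
      · rw [if_pos h, Finset.mem_Ioi]
        by_contra hle
        push_neg at hle
        rcases lt_or_eq_of_le (show s i ≤ (⟨v, hv⟩ : Fin q) from hle) with hlt | heq
        · exact h2 (i.val + 1) (s i).val (by omega) (by omega) (s i).isLt (Or.inl hlt)
            (by simp)
        · exact h2 (i.val + 1) v (by omega) (by omega) hv (Or.inr ⟨rfl, by omega⟩)
            (by simp only [Nat.add_sub_cancel];
                rw [show (⟨i.val, i.isLt⟩ : Fin m) = i from rfl]; exact heq)
      · rw [if_neg (by omega), if_pos h, Finset.mem_singleton]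
        have hi : i = ⟨u - 1, by omega⟩ := Fin.ext h
        rw [hi]; exact h1
      · rw [if_neg (by omega), if_neg (by omega), Finset.mem_Ici]
        by_contra hle
        push_neg at hle
        have hlt : (s i).val < v := hle
        exact h2 (i.val + 1) (s i).val (by omega) (by omega) (s i).isLt (Or.inl hlt)
          (by simp)
    · intro h
      have h1 : s ⟨u - 1, by omega⟩ = ⟨v, hv⟩ := by
        have hi := h ⟨u - 1, by omega⟩
        rw [if_neg (show ¬ (u - 1 < u - 1) by omega), if_pos rfl, Finset.mem_singleton] at hi
        exact hi
      refine ⟨h1, ?_⟩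
      rintro u' v' hu1' hum' hv' (hc | ⟨rfl, hc⟩) heq
      · have hi := h ⟨u' - 1, by omega⟩
        rcases lt_trichotomy (u' - 1) (u - 1) with hlt | heqi | hgt
        · rw [if_pos hlt, Finset.mem_Ioi, heq] at hi
          rw [Fin.mk_lt_mk] at hi; omega
        · rw [if_neg (show ¬ (u' - 1 < u - 1) by omega), if_pos heqi,
            Finset.mem_singleton, heq] at hi
          have : v' = v := by simpa [Fin.ext_iff] using hi
          omega
        · rw [if_neg (show ¬ (u' - 1 < u - 1) by omega),
            if_neg (show ¬ (u' - 1 = u - 1) by omega), Finset.mem_Ici, heq] at hi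
          rw [Fin.mk_le_mk] at hi; omega
      · have hi := h ⟨u' - 1, by omega⟩
        rw [if_pos (show u' - 1 < u - 1 by omega), Finset.mem_Ioi, heq] at hi
        rw [Fin.mk_lt_mk] at hi; omega
  rw [hset, Set.ncard_coe_finset, Fintype.card_piFinset]
  have hcard : ∀ i : Fin m, (T i).card =
      if i.val < u - 1 then q - v - 1 else if i.val = u - 1 then 1 else q - v := by
    intro i
    simp only [hT]
    split_ifs with h1 h2
    · rw [Fin.card_Ioi]; show q - 1 - v = q - v - 1; omega
    · simp
    · rw [Fin.card_Ici]
  have e1 : (univ.filter fun i : Fin m => i.val < u - 1) = Iio ⟨u - 1, by omega⟩ := by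
    ext i; simp [Fin.lt_def]
  have e2 : ((univ.filter fun i : Fin m => ¬ i.val < u - 1).filter
      fun i => i.val = u - 1) = {(⟨u - 1, by omega⟩ : Fin m)} := by
    ext i; simp [Fin.ext_iff]; omega
  have e3 : ((univ.filter fun i : Fin m => ¬ i.val < u - 1).filter
      fun i => ¬ i.val = u - 1) = Ioi ⟨u - 1, by omega⟩ := by
    ext i; simp [Fin.lt_def]; omega
  calc ∏ i, (T i).card
      = ∏ i : Fin m, (if i.val < u - 1 then q - v - 1
          else if i.val = u - 1 then 1 else q - v) :=
        Finset.prod_congr rfl fun i _ => hcard i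
    _ = (q - v - 1) ^ (u - 1) * (q - v) ^ (m - u) := by
        rw [Finset.prod_ite, Finset.prod_const, Finset.prod_ite, Finset.prod_const,
          Finset.prod_const, e1, e2, e3, Fin.card_Iio, Finset.card_singleton, Fin.card_Ioi]
        rw [show m - 1 - (u - 1) = m - u by omega]
        simp
end

section
/- Consider the Yan et al. / Tang & Ramamoorthy placement with integer parameters q, m ≥ 2, and assume ε ≥ 1 and q^{m−1} ≥ 2ε + 1. For u ∈ {1,…,m} and v ∈ Z_q set x_{(u,v)} = (q − v − 1)^{u−1} (q − v)^{m−u} (with 0^0 = 1), and order these pairs by: (u′,v′) ≺ (u,v) iff v′ < v, or v′ = v and u′ < u. Let (u₀, v₀) be the first pair in this order with x_{(u₀,v₀)} < 2ε (such a pair exists since m ≥ 2). Then u₀ ≥ 2 and ℓ*(X,ε) ≥ 2ε · (v₀(m − 1) + u₀ + q − 2). -/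
open Matrix Finset

-- Kernel property of a valid encoder
lemma validEncoder_ker {𝓕 𝓚 : Type} [Fintype 𝓕] {F : Type} [Field F] [Fintype F]
    {X : 𝓚 → Finset 𝓕} {ε l : ℕ} {H : Matrix (Fin l) 𝓕 F}
    (hH : ValidEncoder F X ε H) (k : 𝓚) (d : 𝓕 → F) (hd : H.mulVec d = 0)
    (hcard : ({f | d f ≠ 0} ∩ (X k : Set 𝓕)).ncard ≤ 2 * ε) :
    ∀ f ∈ X k, d f = 0 := by
  classical
  obtain ⟨D, hD⟩ := hH k
  set S : Finset 𝓕 := (X k).filter (fun f => d f ≠ 0) with hS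
  have hScard : S.card ≤ 2 * ε := by
    have : (S : Set 𝓕) = {f | d f ≠ 0} ∩ (X k : Set 𝓕) := by
      ext f; simp [hS, and_comm]
    calc S.card = (S : Set 𝓕).ncard := (Set.ncard_coe_finset S).symm
      _ ≤ 2 * ε := by rw [this]; exact hcard
  obtain ⟨S1, hS1sub, hS1card⟩ := Finset.exists_subset_card_eq (Nat.min_le_left S.card ε)
  set S2 : Finset 𝓕 := S \ S1 with hS2
  have hS2card : S2.card = S.card - min S.card ε := by
    rw [hS2, Finset.card_sdiff_of_subset hS1sub, hS1card]
  set e1 : 𝓕 → F := fun f => if f ∈ S1 then d f else 0 with he1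
  set e2 : 𝓕 → F := fun f => if f ∈ S2 then -(d f) else 0 with he2
  have hwt1 : {f | e1 f ≠ 0}.ncard ≤ ε := by
    have hsub : {f | e1 f ≠ 0} ⊆ ↑S1 := by
      intro f hf
      simp only [he1, Set.mem_setOf_eq] at hf
      by_cases h : f ∈ S1
      · exact Finset.mem_coe.2 h
      · simp [h] at hf
    calc {f | e1 f ≠ 0}.ncard ≤ (S1 : Set 𝓕).ncard :=
          Set.ncard_le_ncard hsub (S1.finite_toSet)
      _ = S1.card := Set.ncard_coe_finset S1
      _ ≤ ε := by omega
  have hwt2 : {f | e2 f ≠ 0}.ncard ≤ ε := by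
    have hsub : {f | e2 f ≠ 0} ⊆ ↑S2 := by
      intro f hf
      simp only [he2, Set.mem_setOf_eq] at hf
      by_cases h : f ∈ S2
      · exact Finset.mem_coe.2 h
      · simp [h] at hf
    calc {f | e2 f ≠ 0}.ncard ≤ (S2 : Set 𝓕).ncard :=
          Set.ncard_le_ncard hsub (S2.finite_toSet)
      _ = S2.card := Set.ncard_coe_finset S2
      _ ≤ ε := by omega
  -- e1 - e2 = d on X k
  have hkey : ∀ f ∈ X k, e1 f - e2 f = d f := by
    intro f hf
    by_cases hdf : d f = 0
    · have h1 : f ∉ S1 := fun h => by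
        have := hS1sub h; rw [hS] at this; simp [hdf] at this
      have h2 : f ∉ S2 := fun h => by
        rw [hS2] at h; have := (Finset.mem_sdiff.1 h).1
        rw [hS] at this; simp [hdf] at this
      simp [he1, he2, h1, h2, hdf]
    · have hfS : f ∈ S := by rw [hS]; simp [hf, hdf]
      by_cases h1 : f ∈ S1
      · have h2 : f ∉ S2 := by rw [hS2]; simp [h1]
        simp [he1, he2, h1, h2]
      · have h2 : f ∈ S2 := by rw [hS2]; simp [hfS, h1]
        simp [he1, he2, h1, h2]
  set w' : 𝓕 → F := fun f => e1 f - e2 f - d f with hw'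
  have hw'X : ∀ f ∈ X k, w' f = 0 := by
    intro f hf; rw [hw']; simp [hkey f hf]
  have heq1 := hD 0 e1 hwt1
  have heq2 := hD w' e2 hwt2
  have hvec : H.mulVec (w' + e2) = H.mulVec ((0 : 𝓕 → F) + e1) := by
    have : (w' + e2) = ((0 : 𝓕 → F) + e1) - d := by
      funext f; simp [hw', Pi.add_apply, Pi.sub_apply]; ring
    rw [this, Matrix.mulVec_sub, hd, sub_zero]
  have hsi : (fun f : {f // f ∈ X k} => w' f.1) = (fun f : {f // f ∈ X k} => (0 : 𝓕 → F) f.1) := by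
    funext f; simp [hw'X f.1 f.2]
  rw [hvec, hsi, heq1] at heq2
  intro f hf
  have h := congrFun heq2 ⟨f, hf⟩
  simp only [Pi.add_apply, Pi.zero_apply, zero_add] at h
  rw [hw'] at h
  have h' : e1 f = e1 f - e2 f - d f + e2 f := h
  linear_combination h'

-- Chain lower bound: a sequence of nodes with fresh 2ε-subsets forces l ≥ T * 2ε
lemma chain_bound {𝓕 𝓚 : Type} [Fintype 𝓕] {F : Type} [Field F] [Fintype F]
    {X : 𝓚 → Finset 𝓕} {ε l T : ℕ} {H : Matrix (Fin l) 𝓕 F}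
    (hH : ValidEncoder F X ε H)
    (k : Fin T → 𝓚) (Y : Fin T → Finset 𝓕)
    (hYX : ∀ i, Y i ⊆ X (k i))
    (hcard : ∀ i, (Y i).card = 2 * ε)
    (hfresh : ∀ i j : Fin T, i < j → ∀ f ∈ Y j, f ∉ X (k i)) :
    T * (2 * ε) ≤ l := by
  classical
  set U : Finset 𝓕 := Finset.univ.biUnion Y with hU
  have hdisj : ∀ i j : Fin T, i ≠ j → Disjoint (Y i) (Y j) := by
    intro i j hij
    rw [Finset.disjoint_left]
    intro f hfi hfj
    rcases lt_or_gt_of_ne hij with h | h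
    · exact hfresh i j h f hfj (hYX i hfi)
    · exact hfresh j i h f hfi (hYX j hfj)
  have hUcard : U.card = T * (2 * ε) := by
    rw [hU, Finset.card_biUnion (fun i _ j _ hij => hdisj i j hij)]
    simp [hcard, Finset.sum_const, Finset.card_univ]
  -- the map x ↦ H (extension of x) is injective on functions supported on U
  set ext : ({f // f ∈ U} → F) → (𝓕 → F) :=
    fun x f => if h : f ∈ U then x ⟨f, h⟩ else 0 with hext
  set Φ : ({f // f ∈ U} → F) → (Fin l → F) := fun x => H.mulVec (ext x) with hΦ
  have hinj : Function.Injective Φ := by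
    intro x y hxy
    set d : 𝓕 → F := ext x - ext y with hdd
    have hd0 : H.mulVec d = 0 := by
      rw [hdd, Matrix.mulVec_sub]
      rw [hΦ] at hxy
      simp only at hxy
      rw [hxy]; simp
    have hsupp : ∀ f, d f ≠ 0 → f ∈ U := by
      intro f hf
      by_contra hc
      rw [hdd] at hf
      simp [hext, hc] at hf
    -- show d vanishes on every Y i, by strong induction
    have hYzero : ∀ i : Fin T, ∀ f ∈ Y i, d f = 0 := by
      by_contra hc
      push_neg at hc
      obtain ⟨i₀, hi₀⟩ := hc
      -- take the minimal such i
      have hne : {i : Fin T | ∃ f ∈ Y i, d f ≠ 0}.Nonempty := ⟨i₀, hi₀⟩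
      classical
      obtain ⟨i, hi, hmin⟩ := Set.exists_min_image _ id (Set.toFinite _) hne
      -- for j < i, d vanishes on Y j
      have hjlt : ∀ j : Fin T, j < i → ∀ f ∈ Y j, d f = 0 := by
        intro j hj f hf
        by_contra hdf
        exact absurd (hmin j ⟨f, hf, hdf⟩) (by simp only [id]; exact not_le.2 hj)
      -- support of d within X (k i) is inside Y i
      have hsub : {f | d f ≠ 0} ∩ (X (k i) : Set 𝓕) ⊆ ↑(Y i) := by
        rintro f ⟨hdf, hfX⟩
        have hfU : f ∈ U := hsupp f hdf
        rw [hU, Finset.mem_biUnion] at hfU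
        obtain ⟨j, _, hfj⟩ := hfU
        rcases lt_trichotomy j i with h | h | h
        · exact absurd (hjlt j h f hfj) hdf
        · rw [h] at hfj; exact Finset.mem_coe.2 hfj
        · exact absurd hfX (hfresh i j h f hfj)
      have hncard : ({f | d f ≠ 0} ∩ (X (k i) : Set 𝓕)).ncard ≤ 2 * ε := by
        calc ({f | d f ≠ 0} ∩ (X (k i) : Set 𝓕)).ncard ≤ ((Y i : Set 𝓕)).ncard :=
            Set.ncard_le_ncard hsub (Y i).finite_toSet
          _ = (Y i).card := Set.ncard_coe_finset _
          _ = 2 * ε := hcard i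
      obtain ⟨f, hf, hdf⟩ := hi
      exact hdf (validEncoder_ker hH (k i) d hd0 hncard f (hYX i hf))
    have hdz : d = 0 := by
      funext f
      by_contra hdf
      have hfU := hsupp f hdf
      rw [hU, Finset.mem_biUnion] at hfU
      obtain ⟨j, _, hfj⟩ := hfU
      exact hdf (hYzero j f hfj)
    funext f
    have := congrFun hdz f.1
    rw [hdd] at this
    simp only [Pi.sub_apply, Pi.zero_apply, sub_eq_zero, hext] at this
    simpa [f.2] using this
  have hcardle := Fintype.card_le_of_injective Φ hinj
  rw [Fintype.card_fun, Fintype.card_fun] at hcardle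
  have hF : 1 < Fintype.card F := Fintype.one_lt_card
  rw [Fintype.card_coe, Fintype.card_fin] at hcardle
  rw [hUcard] at hcardle
  exact (Nat.pow_le_pow_iff_right hF).1 hcardle

-- cardinality of an interval inside Fin n
lemma card_Ico_fin (n x y : ℕ) (hy : y ≤ n) :
    (Finset.univ.filter (fun j : Fin n => x ≤ (j : ℕ) ∧ (j : ℕ) < y)).card = y - x := by
  classical
  have himg : Finset.image (fun j : Fin (y - x) => (⟨(j : ℕ) + x, by omega⟩ : Fin n)) Finset.univ
      = Finset.univ.filter (fun j : Fin n => x ≤ (j : ℕ) ∧ (j : ℕ) < y) := by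
    ext j
    simp only [Finset.mem_image, Finset.mem_filter, Finset.mem_univ, true_and]
    constructor
    · rintro ⟨i, _, rfl⟩; constructor <;> simp <;> omega
    · rintro ⟨h1, h2⟩
      refine ⟨⟨(j : ℕ) - x, by omega⟩, ?_⟩
      apply Fin.ext
      simp
      omega
  calc (Finset.univ.filter (fun j : Fin n => x ≤ (j : ℕ) ∧ (j : ℕ) < y)).card
      = (Finset.image (fun j : Fin (y - x) => (⟨(j : ℕ) + x, by omega⟩ : Fin n)) Finset.univ).card := by rw [himg]
    _ = (Finset.univ : Finset (Fin (y - x))).card := Finset.card_image_of_injective _ (by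
          intro a b hab
          have : (a : ℕ) + x = (b : ℕ) + x := by
            have := congrArg (fun z : Fin n => (z : ℕ)) hab
            simpa using this
          ext; omega)
    _ = y - x := by simp

-- the generic "free cell" condition
def ytCond (q m a v W B : ℕ) (s : Fin m → Fin q) : Prop :=
  ∀ j : Fin m, if (j : ℕ) = a then (s j : ℕ) = v
    else W + (if (j : ℕ) < B then 1 else 0) ≤ (s j : ℕ)

instance (q m a v W B : ℕ) : DecidablePred (ytCond q m a v W B) := by
  intro s; unfold ytCond; infer_instance

lemma card_ytCond (q m a v W B : ℕ) (ha : a < m) (hv : v < q) (hB : B ≤ m) :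
    (Finset.univ.filter (ytCond q m a v W B)).card =
      (q - (W + 1)) ^ ((Finset.univ.filter (fun j : Fin m => (j : ℕ) < B ∧ (j : ℕ) ≠ a)).card)
        * (q - W) ^ ((Finset.univ.filter (fun j : Fin m => ¬ ((j : ℕ) < B) ∧ (j : ℕ) ≠ a)).card) := by
  classical
  set A : Fin m → Finset (Fin q) := fun j =>
    if (j : ℕ) = a then {(⟨v, hv⟩ : Fin q)}
    else Finset.univ.filter (fun x : Fin q => W + (if (j : ℕ) < B then 1 else 0) ≤ (x : ℕ)) with hA
  have hpi : Finset.univ.filter (ytCond q m a v W B) = Fintype.piFinset A := by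
    ext s
    simp only [Finset.mem_filter, Finset.mem_univ, true_and, Fintype.mem_piFinset, ytCond, hA]
    constructor
    · intro h j
      have := h j
      by_cases hj : (j : ℕ) = a
      · rw [if_pos hj] at this ⊢
        simp only [Finset.mem_singleton]
        ext; exact this
      · rw [if_neg hj] at this ⊢
        simp only [Finset.mem_filter, Finset.mem_univ, true_and]
        exact this
    · intro h j
      have := h j
      by_cases hj : (j : ℕ) = a
      · rw [if_pos hj] at this ⊢
        simp only [Finset.mem_singleton] at this
        rw [this]
      · rw [if_neg hj] at this ⊢
        simp only [Finset.mem_filter, Finset.mem_univ, true_and] at this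
        exact this
  rw [hpi, Fintype.card_piFinset]
  have hcardA : ∀ j : Fin m, (A j).card =
      if (j : ℕ) = a then 1 else if (j : ℕ) < B then q - (W + 1) else q - W := by
    intro j
    have hval : (Finset.univ.filter (fun x : Fin q => W + (if (j : ℕ) < B then 1 else 0) ≤ (x : ℕ))).card
        = q - (W + (if (j : ℕ) < B then 1 else 0)) := by
      have := card_Ico_fin q (W + (if (j : ℕ) < B then 1 else 0)) q le_rfl
      rw [← this]
      congr 1
      apply Finset.filter_congr
      intro x _
      exact ⟨fun h => ⟨h, x.isLt⟩, fun h => h.1⟩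
    by_cases hj : (j : ℕ) = a
    · have hAj : A j = {(⟨v, hv⟩ : Fin q)} := by rw [hA]; simp only [if_pos hj]
      rw [hAj, if_pos hj]
      simp
    · have hAj : A j = Finset.univ.filter
          (fun x : Fin q => W + (if (j : ℕ) < B then 1 else 0) ≤ (x : ℕ)) := by
        rw [hA]; simp only [if_neg hj]
      rw [hAj, if_neg hj, hval]
      by_cases hjB : (j : ℕ) < B
      · simp only [if_pos hjB]
      · simp only [if_neg hjB, Nat.add_zero]
  simp only [hcardA]
  set a' : Fin m := ⟨a, ha⟩ with ha'
  rw [← Finset.mul_prod_erase Finset.univ _ (Finset.mem_univ a')]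
  have h1 : (if ((a' : ℕ) = a) then 1 else if (a' : ℕ) < B then q - (W+1) else q - W) = 1 := by
    simp [ha']
  rw [h1, one_mul]
  have h2 : ∀ j ∈ Finset.univ.erase a',
      (if ((j : ℕ) = a) then 1 else if (j : ℕ) < B then q - (W+1) else q - W)
        = if (j : ℕ) < B then q - (W+1) else q - W := by
    intro j hj
    have hne : j ≠ a' := (Finset.mem_erase.1 hj).1
    have : (j : ℕ) ≠ a := by
      intro hc; exact hne (Fin.ext (by simp [hc, ha']))
    rw [if_neg this]
  rw [Finset.prod_congr rfl h2, Finset.prod_ite, Finset.prod_const, Finset.prod_const]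
  have e1 : (Finset.univ.erase a').filter (fun j : Fin m => (j : ℕ) < B)
      = Finset.univ.filter (fun j : Fin m => (j : ℕ) < B ∧ (j : ℕ) ≠ a) := by
    ext j
    simp only [Finset.mem_filter, Finset.mem_erase, Finset.mem_univ, true_and, and_true]
    constructor
    · rintro ⟨hne, hlt⟩
      exact ⟨hlt, fun hc => hne (Fin.ext (by simp [hc, ha']))⟩
    · rintro ⟨hlt, hne⟩
      exact ⟨fun hc => hne (by rw [hc]), hlt⟩
  have e2 : (Finset.univ.erase a').filter (fun j : Fin m => ¬ ((j : ℕ) < B))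
      = Finset.univ.filter (fun j : Fin m => ¬ ((j : ℕ) < B) ∧ (j : ℕ) ≠ a) := by
    ext j
    simp only [Finset.mem_filter, Finset.mem_erase, Finset.mem_univ, true_and, and_true]
    constructor
    · rintro ⟨hne, hlt⟩
      exact ⟨hlt, fun hc => hne (Fin.ext (by simp [hc, ha']))⟩
    · rintro ⟨hlt, hne⟩
      exact ⟨fun hc => hne (by rw [hc]), hlt⟩
  rw [e1, e2]

def ytA (m v₀ b t : ℕ) : ℕ :=
  if t < v₀ * m then t % m else if t < v₀ * m + b then t - v₀ * m else 0

def ytV (m v₀ b t : ℕ) : ℕ :=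
  if t < v₀ * m then t / m else if t < v₀ * m + b then v₀ else v₀ + 1 + (t - (v₀ * m + b))

def ytB (m v₀ b t : ℕ) : ℕ := if t < v₀ * m + b then ytA m v₀ b t else b

def ytW (m v₀ b t : ℕ) : ℕ := if t < v₀ * m + b then ytV m v₀ b t else v₀

lemma yt_eval1 {m v₀ b t : ℕ} (h : t < v₀ * m) :
    ytA m v₀ b t = t % m ∧ ytV m v₀ b t = t / m ∧ ytB m v₀ b t = t % m ∧ ytW m v₀ b t = t / m := by
  have h2 : t < v₀ * m + b := by omega
  refine ⟨if_pos h, if_pos h, ?_, ?_⟩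
  · rw [ytB, if_pos h2, ytA, if_pos h]
  · rw [ytW, if_pos h2, ytV, if_pos h]

lemma yt_eval2 {m v₀ b t : ℕ} (h1 : ¬ t < v₀ * m) (h2 : t < v₀ * m + b) :
    ytA m v₀ b t = t - v₀ * m ∧ ytV m v₀ b t = v₀ ∧ ytB m v₀ b t = t - v₀ * m ∧ ytW m v₀ b t = v₀ := by
  refine ⟨?_, ?_, ?_, ?_⟩
  · rw [ytA, if_neg h1, if_pos h2]
  · rw [ytV, if_neg h1, if_pos h2]
  · rw [ytB, if_pos h2, ytA, if_neg h1, if_pos h2]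
  · rw [ytW, if_pos h2, ytV, if_neg h1, if_pos h2]

lemma yt_eval3 {m v₀ b t : ℕ} (h2 : ¬ t < v₀ * m + b) :
    ytA m v₀ b t = 0 ∧ ytV m v₀ b t = v₀ + 1 + (t - (v₀ * m + b)) ∧
      ytB m v₀ b t = b ∧ ytW m v₀ b t = v₀ := by
  have h1 : ¬ t < v₀ * m := by omega
  refine ⟨?_, ?_, ?_, ?_⟩
  · rw [ytA, if_neg h1, if_neg h2]
  · rw [ytV, if_neg h1, if_neg h2]
  · rw [ytB, if_neg h2]
  · rw [ytW, if_neg h2]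

lemma lex_div_mod {m t' t : ℕ} (hm : 0 < m) (h : t' < t) :
    t' / m < t / m ∨ (t' / m = t / m ∧ t' % m < t % m) := by
  have hle : t' / m ≤ t / m := Nat.div_le_div_right (le_of_lt h)
  rcases lt_or_eq_of_le hle with hlt | heq
  · exact Or.inl hlt
  · right
    refine ⟨heq, ?_⟩
    have e1 := Nat.div_add_mod t' m
    have e2 := Nat.div_add_mod t m
    rw [heq] at e1
    set K := m * (t / m) with hK
    omega

lemma div_lt_of_lt_mul' {t v₀ m : ℕ} (h : t < v₀ * m) : t / m < v₀ :=
  Nat.div_lt_of_lt_mul (by rw [Nat.mul_comm]; omega : t < m * v₀)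

lemma ytA_lt {m v₀ b t : ℕ} (hm : 0 < m) (hb : b ≤ m) : ytA m v₀ b t < m := by
  by_cases h1 : t < v₀ * m
  · rw [(yt_eval1 h1).1]; exact Nat.mod_lt _ hm
  · by_cases h2 : t < v₀ * m + b
    · rw [(yt_eval2 h1 h2).1]; omega
    · rw [(yt_eval3 h2).1]; omega

lemma ytV_lt {m v₀ b q t : ℕ} (hv₀ : v₀ < q) (hT : t < v₀ * m + b + (q - 1 - v₀)) :
    ytV m v₀ b t < q := by
  by_cases h1 : t < v₀ * m
  · rw [(yt_eval1 h1).2.1]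
    have := div_lt_of_lt_mul' h1
    omega
  · by_cases h2 : t < v₀ * m + b
    · rw [(yt_eval2 h1 h2).2.1]; omega
    · rw [(yt_eval3 h2).2.1]; omega

lemma ytSep {m v₀ b q t' t : ℕ} (hm : 0 < m) (hb : 1 ≤ b)
    (h : t' < t) (hT : t < v₀ * m + b + (q - 1 - v₀)) :
    (ytV m v₀ b t' < ytW m v₀ b t ∧ ytV m v₀ b t' < ytV m v₀ b t) ∨
    (ytA m v₀ b t' ≠ ytA m v₀ b t ∧ ytA m v₀ b t' < ytB m v₀ b t ∧ ytV m v₀ b t' = ytW m v₀ b t) ∨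
    (ytA m v₀ b t' = ytA m v₀ b t ∧ ytV m v₀ b t' ≠ ytV m v₀ b t) := by
  by_cases h1 : t < v₀ * m
  · -- both phase 1
    have h1' : t' < v₀ * m := by omega
    obtain ⟨ea', ev', _, _⟩ := yt_eval1 (m := m) (b := b) h1'
    obtain ⟨ea, ev, eb, ew⟩ := yt_eval1 (m := m) (b := b) h1
    rw [ea', ev', ea, ev, eb, ew]
    rcases lex_div_mod hm h with hlt | ⟨heq, hmod⟩
    · exact Or.inl ⟨hlt, hlt⟩
    · exact Or.inr (Or.inl ⟨by omega, hmod, heq⟩)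
  · by_cases h2 : t < v₀ * m + b
    · obtain ⟨ea, ev, eb, ew⟩ := yt_eval2 (m := m) h1 h2
      rw [ea, ev, eb, ew]
      by_cases h1' : t' < v₀ * m
      · obtain ⟨ea', ev', _, _⟩ := yt_eval1 (m := m) (b := b) h1'
        rw [ea', ev']
        have := div_lt_of_lt_mul' h1'
        exact Or.inl ⟨this, this⟩
      · have h2' : t' < v₀ * m + b := by omega
        obtain ⟨ea', ev', _, _⟩ := yt_eval2 (m := m) h1' h2'
        rw [ea', ev']
        exact Or.inr (Or.inl ⟨by omega, by omega, rfl⟩)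
    · obtain ⟨ea, ev, eb, ew⟩ := yt_eval3 (m := m) h2
      rw [ea, ev, eb, ew]
      by_cases h1' : t' < v₀ * m
      · obtain ⟨ea', ev', _, _⟩ := yt_eval1 (m := m) (b := b) h1'
        rw [ea', ev']
        have := div_lt_of_lt_mul' h1'
        exact Or.inl ⟨this, by omega⟩
      · by_cases h2' : t' < v₀ * m + b
        · obtain ⟨ea', ev', _, _⟩ := yt_eval2 (m := m) h1' h2'
          rw [ea', ev']
          by_cases hz : t' - v₀ * m = 0
          · exact Or.inr (Or.inr ⟨by omega, by omega⟩)
          · exact Or.inr (Or.inl ⟨by omega, by omega, rfl⟩)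
        · obtain ⟨ea', ev', _, _⟩ := yt_eval3 (m := m) h2'
          rw [ea', ev']
          exact Or.inr (Or.inr ⟨by omega, by omega⟩)

lemma ytB_le {m v₀ b t : ℕ} (hm : 0 < m) (hbm : b ≤ m) : ytB m v₀ b t ≤ m := by
  by_cases h2 : t < v₀ * m + b
  · rw [ytB, if_pos h2]
    exact le_of_lt (ytA_lt hm hbm)
  · rw [ytB, if_neg h2]; exact hbm

lemma ytCard {q m v₀ b ε : ℕ} (hm : 0 < m) (hb : 1 ≤ b) (hbm : b < m) (hv₀ : v₀ < q)
    (hprev' : ∀ u v : ℕ, 1 ≤ u → u ≤ m → v < q →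
      (v < v₀ ∨ (v = v₀ ∧ u < b + 1)) →
        2 * ε ≤ (q - v - 1) ^ (u - 1) * (q - v) ^ (m - u))
    {t : ℕ} (hT : t < v₀ * m + b + (q - 1 - v₀)) :
    2 * ε ≤ (Finset.univ.filter (ytCond q m (ytA m v₀ b t) (ytV m v₀ b t)
      (ytW m v₀ b t) (ytB m v₀ b t))).card := by
  have ham : ytA m v₀ b t < m := ytA_lt hm (le_of_lt hbm)
  have hvq : ytV m v₀ b t < q := ytV_lt hv₀ hT
  have hBm : ytB m v₀ b t ≤ m := ytB_le hm (le_of_lt hbm)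
  rw [card_ytCond q m _ _ _ _ ham hvq hBm]
  by_cases h2 : t < v₀ * m + b
  · -- phases 1 and 2 : A = B, W = V
    have hAB : ytB m v₀ b t = ytA m v₀ b t := by rw [ytB, if_pos h2]
    have hWV : ytW m v₀ b t = ytV m v₀ b t := by rw [ytW, if_pos h2]
    set a := ytA m v₀ b t with hadef
    set v := ytV m v₀ b t with hvdef
    rw [hAB, hWV]
    have hc1 : (Finset.univ.filter (fun j : Fin m => (j : ℕ) < a ∧ (j : ℕ) ≠ a)).card = a := by
      have : (Finset.univ.filter (fun j : Fin m => (j : ℕ) < a ∧ (j : ℕ) ≠ a))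
          = (Finset.univ.filter (fun j : Fin m => 0 ≤ (j : ℕ) ∧ (j : ℕ) < a)) := by
        apply Finset.filter_congr
        intro x _
        constructor
        · rintro ⟨h, _⟩; exact ⟨Nat.zero_le _, h⟩
        · rintro ⟨_, h⟩; exact ⟨h, by omega⟩
      rw [this, card_Ico_fin m 0 a (le_of_lt ham)]
      omega
    have hc2 : (Finset.univ.filter (fun j : Fin m => ¬ ((j : ℕ) < a) ∧ (j : ℕ) ≠ a)).card
        = m - (a + 1) := by
      have : (Finset.univ.filter (fun j : Fin m => ¬ ((j : ℕ) < a) ∧ (j : ℕ) ≠ a))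
          = (Finset.univ.filter (fun j : Fin m => a + 1 ≤ (j : ℕ) ∧ (j : ℕ) < m)) := by
        apply Finset.filter_congr
        intro x _
        constructor
        · rintro ⟨h1, h2⟩; exact ⟨by omega, x.isLt⟩
        · rintro ⟨h1, _⟩; exact ⟨by omega, by omega⟩
      rw [this, card_Ico_fin m (a+1) m le_rfl]
    rw [hc1, hc2]
    have hbase : q - (v + 1) = q - v - 1 := by omega
    rw [hbase]
    have key := hprev' (a + 1) v (by omega) (by omega) hvq ?_
    · have : a + 1 - 1 = a := by omega
      rw [this] at key
      have : m - (a + 1) = m - (a+1) := rfl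
      exact key
    · -- ordering condition
      by_cases h1 : t < v₀ * m
      · obtain ⟨ea, ev, _, _⟩ := yt_eval1 (m := m) (b := b) h1
        left
        rw [hvdef, ev]
        exact div_lt_of_lt_mul' h1
      · obtain ⟨ea, ev, _, _⟩ := yt_eval2 (m := m) h1 h2
        right
        constructor
        · rw [hvdef, ev]
        · rw [hadef, ea]; omega
  · -- phase 3 : A = 0, B = b, W = v₀
    obtain ⟨ea, ev, eb, ew⟩ := yt_eval3 (m := m) h2
    rw [ea, eb, ew]
    have hc1 : (Finset.univ.filter (fun j : Fin m => (j : ℕ) < b ∧ (j : ℕ) ≠ 0)).card = b - 1 := by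
      have : (Finset.univ.filter (fun j : Fin m => (j : ℕ) < b ∧ (j : ℕ) ≠ 0))
          = (Finset.univ.filter (fun j : Fin m => 1 ≤ (j : ℕ) ∧ (j : ℕ) < b)) := by
        apply Finset.filter_congr
        intro x _
        constructor
        · rintro ⟨h1', h2'⟩; exact ⟨by omega, h1'⟩
        · rintro ⟨h1', h2'⟩; exact ⟨h2', by omega⟩
      rw [this, card_Ico_fin m 1 b (by omega)]
    have hc2 : (Finset.univ.filter (fun j : Fin m => ¬ ((j : ℕ) < b) ∧ (j : ℕ) ≠ 0)).card
        = m - b := by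
      have : (Finset.univ.filter (fun j : Fin m => ¬ ((j : ℕ) < b) ∧ (j : ℕ) ≠ 0))
          = (Finset.univ.filter (fun j : Fin m => b ≤ (j : ℕ) ∧ (j : ℕ) < m)) := by
        apply Finset.filter_congr
        intro x _
        constructor
        · rintro ⟨h1', h2'⟩; exact ⟨by omega, x.isLt⟩
        · rintro ⟨h1', _⟩; exact ⟨by omega, by omega⟩
      rw [this, card_Ico_fin m b m le_rfl]
    rw [hc1, hc2]
    have hbase : q - (v₀ + 1) = q - v₀ - 1 := by omega
    rw [hbase]
    exact hprev' b v₀ hb (by omega) hv₀ (Or.inr ⟨rfl, by omega⟩)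

lemma encoder_exists {𝓕 𝓚 : Type} [Fintype 𝓕] [DecidableEq 𝓕] (X : 𝓚 → Finset 𝓕) (ε : ℕ) :
    ∃ (F : Type) (inst1 : Field F) (inst2 : Fintype F)
      (H : Matrix (Fin (Fintype.card 𝓕)) 𝓕 F), @ValidEncoder 𝓕 𝓚 _ F inst1 inst2 X ε _ H := by
  classical
  refine ⟨ZMod 2, inferInstance, inferInstance,
    Matrix.of (fun i f => if f = (Fintype.equivFin 𝓕).symm i then 1 else 0), ?_⟩
  intro k
  refine ⟨fun c _ f => c (Fintype.equivFin 𝓕 f.1), ?_⟩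
  intro w e _
  funext f
  have hmv : ∀ (x : 𝓕 → ZMod 2) (i : Fin (Fintype.card 𝓕)),
      (Matrix.of (fun i f => if f = (Fintype.equivFin 𝓕).symm i then (1 : ZMod 2) else 0)).mulVec x i
        = x ((Fintype.equivFin 𝓕).symm i) := by
    intro x i
    simp [Matrix.mulVec, dotProduct, ite_mul, one_mul, zero_mul]
  show ((Matrix.of fun i f => if f = (Fintype.equivFin 𝓕).symm i then (1 : ZMod 2) else 0).mulVec
      (w + e)) ((Fintype.equivFin 𝓕) f.1) = (w + e) f.1
  rw [hmv]
  simp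

/-- For the Yan et al. / Tang & Ramamoorthy placement with parameters
`q, m ≥ 2` (subfiles `Z_q^m`; nodes `(u,v)`, `1 ≤ u ≤ m+1`, `v ∈ Z_q`, encoded below with
`u : Fin (m+1)` where `u < m` are the coordinate nodes and `u = m` the mod-`q`-sum nodes),
assume `ε ≥ 1` and `q^{m−1} ≥ 2ε + 1`. With `x_{(u,v)} = (q−v−1)^{u−1}(q−v)^{m−u}` and
`(u₀, v₀)` the first pair in the order `≺` with `x_{(u₀,v₀)} < 2ε`, one has `u₀ ≥ 2` and
`ℓ*(X, ε) ≥ 2ε (v₀(m−1) + u₀ + q − 2)`. -/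
theorem yan_tang_lower_bound (q m : ℕ) (hq : 2 ≤ q) (hm : 2 ≤ m) (ε : ℕ) (hε : 1 ≤ ε)
    (hZ : 2 * ε + 1 ≤ q ^ (m - 1))
    (u₀ v₀ : ℕ) (hu₀1 : 1 ≤ u₀) (hu₀m : u₀ ≤ m) (hv₀ : v₀ < q)
    (hfirst : (q - v₀ - 1) ^ (u₀ - 1) * (q - v₀) ^ (m - u₀) < 2 * ε)
    (hprev : ∀ u v : ℕ, 1 ≤ u → u ≤ m → v < q →
      (v < v₀ ∨ (v = v₀ ∧ u < u₀)) →
        2 * ε ≤ (q - v - 1) ^ (u - 1) * (q - v) ^ (m - u)) :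
    2 ≤ u₀ ∧
      2 * ε * (v₀ * (m - 1) + u₀ + q - 2) ≤
        optLen (fun k : Fin (m + 1) × Fin q =>
          if h : (k.1 : ℕ) < m then
            Finset.univ.filter (fun s : Fin m → Fin q => s ⟨k.1, h⟩ = k.2)
          else
            Finset.univ.filter
              (fun s : Fin m → Fin q => (∑ i, (s i : ℕ)) % q = (k.2 : ℕ))) ε := by
  classical
  -- first claim : u₀ ≥ 2
  have hu2 : 2 ≤ u₀ := by
    by_contra hc
    have hu1 : u₀ = 1 := by omega
    rw [hu1] at hfirst
    simp only [Nat.sub_self, pow_zero, one_mul] at hfirst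
    rcases Nat.eq_zero_or_pos v₀ with hv0 | hv0
    · rw [hv0] at hfirst
      simp only [Nat.sub_zero] at hfirst
      have h1 : (2 * ε + 1 : ℕ) ≤ q ^ (m - 1) := hZ
      have h2 : q ^ (m - 1) < 2 * ε := hfirst
      linarith
    · have hkey := hprev m (v₀ - 1) (by omega) le_rfl (by omega) (Or.inl (by omega))
      have heq : q - (v₀ - 1) - 1 = q - v₀ := by omega
      rw [heq, Nat.sub_self, pow_zero, mul_one] at hkey
      linarith
  refine ⟨hu2, ?_⟩
  set b : ℕ := u₀ - 1 with hbdef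
  have hb1 : 1 ≤ b := by omega
  have hbm : b < m := by omega
  have hprev' : ∀ u v : ℕ, 1 ≤ u → u ≤ m → v < q →
      (v < v₀ ∨ (v = v₀ ∧ u < b + 1)) →
        2 * ε ≤ (q - v - 1) ^ (u - 1) * (q - v) ^ (m - u) := by
    intro u v h1 h2 h3 h4
    exact hprev u v h1 h2 h3 (by omega)
  set T : ℕ := v₀ * m + b + (q - 1 - v₀) with hTdef
  set X : (Fin (m + 1) × Fin q) → Finset (Fin m → Fin q) := fun k =>
    if h : (k.1 : ℕ) < m then
      Finset.univ.filter (fun s : Fin m → Fin q => s ⟨k.1, h⟩ = k.2)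
    else
      Finset.univ.filter
        (fun s : Fin m → Fin q => (∑ i, (s i : ℕ)) % q = (k.2 : ℕ)) with hXdef
  -- arithmetic : the target equals T * (2 * ε)
  have harith : 2 * ε * (v₀ * (m - 1) + u₀ + q - 2) = T * (2 * ε) := by
    have h1 : v₀ * m = v₀ * (m - 1) + v₀ := by
      have hm1 : m = (m - 1) + 1 := by omega
      calc v₀ * m = v₀ * ((m - 1) + 1) := by rw [← hm1]
        _ = v₀ * (m - 1) + v₀ := by ring
    have h2 : v₀ * (m - 1) + u₀ + q - 2 = T := by
      rw [hTdef]
      set P := v₀ * (m - 1) with hP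
      set Q := v₀ * m with hQ
      omega
    rw [h2, Nat.mul_comm]
  rw [harith]
  unfold optLen
  apply le_csInf
  · exact ⟨Fintype.card (Fin m → Fin q), encoder_exists X ε⟩
  · rintro l ⟨F, inst1, inst2, H, hH⟩
    -- build the chain of nodes
    have hmpos : 0 < m := by omega
    have hnodeA : ∀ t : Fin T, ytA m v₀ b (t : ℕ) < m := fun t => ytA_lt hmpos (le_of_lt hbm)
    have hnodeV : ∀ t : Fin T, ytV m v₀ b (t : ℕ) < q := fun t => ytV_lt hv₀ t.isLt
    set node : Fin T → Fin (m + 1) × Fin q := fun t =>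
      (⟨ytA m v₀ b (t : ℕ), lt_trans (hnodeA t) (Nat.lt_succ_self m)⟩,
       ⟨ytV m v₀ b (t : ℕ), hnodeV t⟩) with hnode
    have hmemX : ∀ (t : Fin T) (s : Fin m → Fin q),
        s ∈ X (node t) ↔ (s ⟨ytA m v₀ b (t : ℕ), hnodeA t⟩ : ℕ) = ytV m v₀ b (t : ℕ) := by
      intro t s
      rw [hXdef, hnode]
      dsimp only
      rw [dif_pos (hnodeA t)]
      rw [Finset.mem_filter]
      simp only [Finset.mem_univ, true_and]
      constructor
      · intro h; rw [h]
      · intro h; exact Fin.ext h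
    set G : Fin T → Finset (Fin m → Fin q) := fun t =>
      Finset.univ.filter (ytCond q m (ytA m v₀ b (t : ℕ)) (ytV m v₀ b (t : ℕ))
        (ytW m v₀ b (t : ℕ)) (ytB m v₀ b (t : ℕ))) with hG
    have hGcard : ∀ t : Fin T, 2 * ε ≤ (G t).card := by
      intro t
      exact ytCard hmpos hb1 hbm hv₀ hprev' t.isLt
    have hGX : ∀ t : Fin T, G t ⊆ X (node t) := by
      intro t s hs
      rw [hmemX]
      rw [hG, Finset.mem_filter] at hs
      have hcond := hs.2 ⟨ytA m v₀ b (t : ℕ), hnodeA t⟩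
      rw [if_pos rfl] at hcond
      exact hcond
    have hGfresh : ∀ t' t : Fin T, t' < t → ∀ s ∈ G t, s ∉ X (node t') := by
      intro t' t htt s hs
      rw [hmemX]
      rw [hG, Finset.mem_filter] at hs
      have hcond := hs.2
      intro hc
      set j : Fin m := ⟨ytA m v₀ b (t' : ℕ), hnodeA t'⟩ with hj
      have hcj := hcond j
      rcases ytSep (q := q) hmpos hb1 htt t.isLt with
          ⟨hW, hV⟩ | ⟨hA, hAB, hVW⟩ | ⟨hA, hV⟩
      · by_cases hja : (j : ℕ) = ytA m v₀ b (t : ℕ)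
        · rw [if_pos hja] at hcj
          omega
        · rw [if_neg hja] at hcj
          by_cases hjb : (j : ℕ) < ytB m v₀ b (t : ℕ) <;>
            [rw [if_pos hjb] at hcj; rw [if_neg hjb] at hcj] <;> omega
      · have hja : (j : ℕ) ≠ ytA m v₀ b (t : ℕ) := hA
        rw [if_neg hja] at hcj
        have hjb : (j : ℕ) < ytB m v₀ b (t : ℕ) := hAB
        rw [if_pos hjb] at hcj
        omega
      · have hja : (j : ℕ) = ytA m v₀ b (t : ℕ) := hA
        rw [if_pos hja] at hcj
        omega
    -- choose the fresh subsets
    have hchoose : ∀ t : Fin T, ∃ Y : Finset (Fin m → Fin q), Y ⊆ G t ∧ Y.card = 2 * ε := by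
      intro t
      obtain ⟨Y, h1, h2⟩ := Finset.exists_subset_card_eq (hGcard t)
      exact ⟨Y, h1, h2⟩
    choose Y hY1 hY2 using hchoose
    exact chain_bound hH node Y (fun t => (hY1 t).trans (hGX t)) hY2
      (fun i j hij f hf => hGfresh i j hij f (hY1 j hf))
end
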